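/- arXiv:2104.06948 — 6 statements merged into one kernel-verified Lean document; each statement's English description precedes it below -/
import Mathlib

section
/- Let (Ω, ℱ, ℙ) be a probability space, ι a countable index set, p : ι → (0,∞) with ∑_{r∈ι} p_r < ∞, and let (T_r)_{r∈ι} be an independent family of random variables with ℙ{T_r > t} = e^{−p_r t} for all t ≥ 0 and each r ∈ ι. Define K_t := ∑_{r∈ι} 1{T_r ≤ t} and Φ(t) := ∑_{r∈ι} (1 − e^{−t p_r}). Then K_t has finite second moment for every t ≥ 0, and for all s, t ≥ 0, Cov(K_s, K_t) = Φ(s+t) − Φ(max(s,t)) = ∑_{r∈ι} (e^{−max(s,t) p_r} − e^{−(s+t) p_r}). -/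
open Filter Topology MeasureTheory ProbabilityTheory
open scoped ENNReal NNReal

theorem stmt6
    {Ω : Type*} [MeasurableSpace Ω] {P : Measure Ω} [IsProbabilityMeasure P]
    {ι : Type*} [Countable ι]
    (p : ι → ℝ) (hp : ∀ r, 0 < p r) (hpsum : Summable p)
    (T : ι → Ω → ℝ) (hTmeas : ∀ r, Measurable (T r))
    (hTindep : iIndepFun T P)
    (hTexp : ∀ r, ∀ t : ℝ, 0 ≤ t →
      P {ω | t < T r ω} = ENNReal.ofReal (Real.exp (-(p r) * t)))
    (K : ℝ → Ω → ℝ) (hK : ∀ t ω, K t ω = ∑' r, if T r ω ≤ t then (1 : ℝ) else 0)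
    (Φ : ℝ → ℝ) (hΦ : ∀ t, Φ t = ∑' r, (1 - Real.exp (-t * p r))) :
    (∀ t : ℝ, 0 ≤ t → MemLp (K t) 2 P) ∧
    (∀ s t : ℝ, 0 ≤ s → 0 ≤ t →
      ((∫ ω, K s ω * K t ω ∂P) - (∫ ω, K s ω ∂P) * (∫ ω, K t ω ∂P)
          = Φ (s + t) - Φ (max s t)) ∧
      (Φ (s + t) - Φ (max s t)
          = ∑' r, (Real.exp (-(max s t) * p r) - Real.exp (-(s + t) * p r)))) := by
  classical
  -- basic exponential bounds
  have hexp_le_one : ∀ (r : ι) (u : ℝ), 0 ≤ u → Real.exp (-(p r) * u) ≤ 1 := by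
    intro r u hu
    rw [Real.exp_le_one_iff]
    have := (hp r).le
    nlinarith
  have hone_sub_nonneg : ∀ (r : ι) (u : ℝ), 0 ≤ u → 0 ≤ 1 - Real.exp (-(p r) * u) := by
    intro r u hu; linarith [hexp_le_one r u hu]
  have hone_sub_le : ∀ (r : ι) (u : ℝ), 1 - Real.exp (-(p r) * u) ≤ p r * u := by
    intro r u
    have := Real.add_one_le_exp (-(p r) * u)
    linarith
  -- summability of the basic real families
  have hSum : ∀ u : ℝ, 0 ≤ u → Summable (fun r => 1 - Real.exp (-(p r) * u)) := by
    intro u hu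
    exact Summable.of_nonneg_of_le (fun r => hone_sub_nonneg r u hu)
      (fun r => hone_sub_le r u) (hpsum.mul_right u)
  -- distribution function
  have hle : ∀ (r : ι) (u : ℝ), 0 ≤ u →
      P {ω | T r ω ≤ u} = ENNReal.ofReal (1 - Real.exp (-(p r) * u)) := by
    intro r u hu
    have hset : {ω | T r ω ≤ u} = {ω | u < T r ω}ᶜ := by
      ext ω; simp [not_lt]
    rw [hset, measure_compl (measurableSet_lt measurable_const (hTmeas r))
      (measure_ne_top _ _), hTexp r u hu, measure_univ,
      ← ENNReal.ofReal_one, ← ENNReal.ofReal_sub _ (Real.exp_nonneg _)]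
  -- the ENNReal-valued indicators and counting process
  set X : ℝ → ι → Ω → ℝ≥0∞ := fun u r ω => if T r ω ≤ u then 1 else 0 with hX
  have hXmeas : ∀ u r, Measurable (X u r) := fun u r =>
    Measurable.ite (measurableSet_le (hTmeas r) measurable_const)
      measurable_const measurable_const
  set N : ℝ → Ω → ℝ≥0∞ := fun u ω => ∑' r, X u r ω with hN
  have hNmeas : ∀ u, Measurable (N u) := fun u => Measurable.ennreal_tsum (hXmeas u)
  have hKN : ∀ u ω, K u ω = (N u ω).toReal := by
    intro u ω
    rw [hK, hN]
    simp only
    rw [ENNReal.tsum_toReal_eq (fun r => by simp only [hX]; split <;> simp)]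
    refine tsum_congr fun r => ?_
    simp only [hX]; split <;> simp
  -- lintegral of single indicator
  have hlint1 : ∀ (r : ι) (u : ℝ), ∫⁻ ω, X u r ω ∂P = P {ω | T r ω ≤ u} := by
    intro r u
    have : (fun ω => X u r ω) = Set.indicator {ω | T r ω ≤ u} (1 : Ω → ℝ≥0∞) := by
      ext ω; by_cases h : T r ω ≤ u <;> simp [hX, Set.indicator_apply, h]
    rw [this, lintegral_indicator_one (measurableSet_le (hTmeas r) measurable_const)]
  -- the ENNReal first-moment sums
  set A : ℝ → ℝ≥0∞ := fun u => ∑' r, ENNReal.ofReal (1 - Real.exp (-(p r) * u)) with hA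
  have hA_ne_top : ∀ u : ℝ, 0 ≤ u → A u ≠ ∞ := by
    intro u hu
    have h1 : A u ≤ ∑' r, ENNReal.ofReal (p r * u) := by
      refine ENNReal.tsum_le_tsum fun r => ENNReal.ofReal_le_ofReal (hone_sub_le r u)
    have h2 : ∑' r, ENNReal.ofReal (p r * u) = ENNReal.ofReal (∑' r, p r * u) := by
      rw [ENNReal.ofReal_tsum_of_nonneg (fun r => mul_nonneg (hp r).le hu)
        (hpsum.mul_right u)]
    exact ne_top_of_le_ne_top (by rw [h2]; exact ENNReal.ofReal_ne_top) h1
  have hlintN : ∀ u : ℝ, 0 ≤ u → ∫⁻ ω, N u ω ∂P = A u := by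
    intro u hu
    rw [hN]
    simp only
    rw [lintegral_tsum (fun r => (hXmeas u r).aemeasurable)]
    exact tsum_congr fun r => by rw [hlint1, hle r u hu]
  -- real first moments
  have hAtoReal : ∀ u : ℝ, 0 ≤ u →
      (A u).toReal = ∑' r, (1 - Real.exp (-(p r) * u)) := by
    intro u hu
    rw [hA]
    simp only
    rw [ENNReal.tsum_toReal_eq (fun r => ENNReal.ofReal_ne_top)]
    exact tsum_congr fun r => ENNReal.toReal_ofReal (hone_sub_nonneg r u hu)
  have hintK : ∀ u : ℝ, 0 ≤ u → ∫ ω, K u ω ∂P = (A u).toReal := by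
    intro u hu
    have h1 : ∫ ω, K u ω ∂P = ∫ ω, (N u ω).toReal ∂P :=
      integral_congr_ae (Filter.Eventually.of_forall fun ω => hKN u ω)
    rw [h1, integral_toReal (hNmeas u).aemeasurable, hlintN u hu]
    refine ae_lt_top (hNmeas u) ?_
    rw [hlintN u hu]; exact hA_ne_top u hu
  -- now the pair computation: fix s t
  have key : ∀ s t : ℝ, 0 ≤ s → 0 ≤ t →
      ∫⁻ ω, N s ω * N t ω ∂P
        = A s * A t + ∑' r, ENNReal.ofReal
            (Real.exp (-(p r) * max s t) - Real.exp (-(p r) * (s + t))) := by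
    intro s t hs ht
    -- measure of intersections
    have hinter : ∀ r r' : ι, P ({ω | T r ω ≤ s} ∩ {ω | T r' ω ≤ t})
        = if r = r' then ENNReal.ofReal (1 - Real.exp (-(p r) * min s t))
          else ENNReal.ofReal (1 - Real.exp (-(p r) * s))
            * ENNReal.ofReal (1 - Real.exp (-(p r') * t)) := by
      intro r r'
      by_cases h : r = r'
      · subst h
        have hset : ({ω | T r ω ≤ s} ∩ {ω | T r ω ≤ t}) = {ω | T r ω ≤ min s t} := by
          ext ω; simp [le_min_iff]
        rw [if_pos rfl, hset, hle r (min s t) (le_min hs ht)]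
      · simp only [if_neg h]
        have h1 : {ω | T r ω ≤ s} = T r ⁻¹' Set.Iic s := rfl
        have h2 : {ω | T r' ω ≤ t} = T r' ⁻¹' Set.Iic t := rfl
        rw [h1, h2, (hTindep.indepFun h).measure_inter_preimage_eq_mul _ _
          measurableSet_Iic measurableSet_Iic, ← h1, ← h2, hle r s hs, hle r' t ht]
    -- product is a double sum of indicators
    have hNmul : ∀ ω, N s ω * N t ω = ∑' q : ι × ι, X s q.1 ω * X t q.2 ω := by
      intro ω
      rw [show (∑' q : ι × ι, X s q.1 ω * X t q.2 ω)
            = ∑' (r : ι) (r' : ι), X s r ω * X t r' ω from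
          ENNReal.tsum_prod (f := fun r r' => X s r ω * X t r' ω)]
      simp only [hN]
      rw [← ENNReal.tsum_mul_right]
      exact tsum_congr fun r => by rw [← ENNReal.tsum_mul_left]
    have hprodint : ∀ (r r' : ι), ∫⁻ ω, X s r ω * X t r' ω ∂P
        = P ({ω | T r ω ≤ s} ∩ {ω | T r' ω ≤ t}) := by
      intro r r'
      have : (fun ω => X s r ω * X t r' ω)
          = Set.indicator ({ω | T r ω ≤ s} ∩ {ω | T r' ω ≤ t}) (1 : Ω → ℝ≥0∞) := by
        ext ω
        by_cases h1 : T r ω ≤ s <;> by_cases h2 : T r' ω ≤ t <;>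
          simp [hX, Set.indicator_apply, h1, h2]
      rw [this, lintegral_indicator_one
        ((measurableSet_le (hTmeas r) measurable_const).inter
          (measurableSet_le (hTmeas r') measurable_const))]
    have hlintNN : ∫⁻ ω, N s ω * N t ω ∂P
        = ∑' q : ι × ι, P ({ω | T q.1 ω ≤ s} ∩ {ω | T q.2 ω ≤ t}) := by
      rw [lintegral_congr hNmul,
        lintegral_tsum (f := fun (q : ι × ι) ω => X s q.1 ω * X t q.2 ω)
          (fun q => ((hXmeas s q.1).mul (hXmeas t q.2)).aemeasurable)]
      exact tsum_congr fun q => hprodint q.1 q.2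
    -- algebra: c = a*b + d
    have halg : ∀ r : ι, 1 - Real.exp (-(p r) * min s t)
        = (1 - Real.exp (-(p r) * s)) * (1 - Real.exp (-(p r) * t))
          + (Real.exp (-(p r) * max s t) - Real.exp (-(p r) * (s + t))) := by
      intro r
      have hst : Real.exp (-(p r) * (s + t))
          = Real.exp (-(p r) * s) * Real.exp (-(p r) * t) := by
        rw [← Real.exp_add]; ring_nf
      rcases le_total s t with h | h
      · rw [min_eq_left h, max_eq_right h, hst]; ring
      · rw [min_eq_right h, max_eq_left h, hst]; ring
    have hd_nonneg : ∀ r : ι,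
        0 ≤ Real.exp (-(p r) * max s t) - Real.exp (-(p r) * (s + t)) := by
      intro r
      have : -(p r) * (s + t) ≤ -(p r) * max s t := by
        have := (hp r).le
        rcases le_total s t with h | h
        · rw [max_eq_right h]; nlinarith
        · rw [max_eq_left h]; nlinarith
      linarith [Real.exp_le_exp.mpr this]
    have hab_nonneg : ∀ r r' : ι,
        0 ≤ (1 - Real.exp (-(p r) * s)) * (1 - Real.exp (-(p r') * t)) :=
      fun r r' => mul_nonneg (hone_sub_nonneg r s hs) (hone_sub_nonneg r' t ht)
    -- split the double sum
    have hsplit : ∀ q : ι × ι, P ({ω | T q.1 ω ≤ s} ∩ {ω | T q.2 ω ≤ t})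
        = ENNReal.ofReal (1 - Real.exp (-(p q.1) * s))
            * ENNReal.ofReal (1 - Real.exp (-(p q.2) * t))
          + (if q.1 = q.2 then ENNReal.ofReal
              (Real.exp (-(p q.1) * max s t) - Real.exp (-(p q.1) * (s + t))) else 0) := by
      rintro ⟨r, r'⟩
      rw [hinter r r']
      by_cases h : r = r'
      · subst h
        rw [if_pos rfl, if_pos rfl, halg r,
          ENNReal.ofReal_add (hab_nonneg r r) (hd_nonneg r),
          ENNReal.ofReal_mul (hone_sub_nonneg r s hs)]
      · simp [h]
    rw [hlintNN, tsum_congr hsplit, ENNReal.tsum_add]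
    congr 1
    · rw [ENNReal.tsum_prod (f := fun r r' => ENNReal.ofReal (1 - Real.exp (-(p r) * s))
          * ENNReal.ofReal (1 - Real.exp (-(p r') * t)))]
      simp only [ENNReal.tsum_mul_left, ENNReal.tsum_mul_right, hA]
    · rw [ENNReal.tsum_prod (f := fun r r' => if r = r' then ENNReal.ofReal
          (Real.exp (-(p r) * max s t) - Real.exp (-(p r) * (s + t))) else 0)]
      exact tsum_congr fun r =>
        (tsum_eq_single r fun r' hr' => if_neg fun e => hr' e.symm).trans (if_pos rfl)
  -- the D-sum and its properties
  have hD_le : ∀ s t : ℝ, 0 ≤ s → 0 ≤ t →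
      (∑' r, ENNReal.ofReal
        (Real.exp (-(p r) * max s t) - Real.exp (-(p r) * (s + t)))) ≤ A (s + t) := by
    intro s t hs ht
    refine ENNReal.tsum_le_tsum fun r => ENNReal.ofReal_le_ofReal ?_
    have := hexp_le_one r (max s t) (le_max_of_le_left hs)
    linarith
  have hD_ne_top : ∀ s t : ℝ, 0 ≤ s → 0 ≤ t →
      (∑' r, ENNReal.ofReal
        (Real.exp (-(p r) * max s t) - Real.exp (-(p r) * (s + t)))) ≠ ∞ := by
    intro s t hs ht
    exact ne_top_of_le_ne_top (hA_ne_top (s + t) (by linarith)) (hD_le s t hs ht)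
  have hM_ne_top : ∀ s t : ℝ, 0 ≤ s → 0 ≤ t → ∫⁻ ω, N s ω * N t ω ∂P ≠ ∞ := by
    intro s t hs ht
    rw [key s t hs ht]
    exact ENNReal.add_ne_top.mpr
      ⟨ENNReal.mul_ne_top (hA_ne_top s hs) (hA_ne_top t ht), hD_ne_top s t hs ht⟩
  -- integral of the product
  have hintKK : ∀ s t : ℝ, 0 ≤ s → 0 ≤ t →
      ∫ ω, K s ω * K t ω ∂P = (∫⁻ ω, N s ω * N t ω ∂P).toReal := by
    intro s t hs ht
    have h1 : ∫ ω, K s ω * K t ω ∂P = ∫ ω, (N s ω * N t ω).toReal ∂P := by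
      refine integral_congr_ae (Filter.Eventually.of_forall fun ω => ?_)
      show K s ω * K t ω = (N s ω * N t ω).toReal
      rw [hKN s ω, hKN t ω, ENNReal.toReal_mul]
    rw [h1, integral_toReal (f := fun ω => N s ω * N t ω) ((hNmeas s).mul (hNmeas t)).aemeasurable]
    exact ae_lt_top ((hNmeas s).mul (hNmeas t)) (hM_ne_top s t hs ht)
  constructor
  · -- Memℒp
    intro t ht
    have hmeas : AEStronglyMeasurable (K t) P := by
      have : K t = fun ω => (N t ω).toReal := funext fun ω => hKN t ω
      rw [this]
      exact (ENNReal.measurable_toReal.comp (hNmeas t)).aestronglyMeasurable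
    rw [memLp_two_iff_integrable_sq hmeas]
    have : (fun ω => K t ω ^ 2) = fun ω => (N t ω * N t ω).toReal := by
      ext ω; rw [hKN t ω, ENNReal.toReal_mul]; ring
    rw [this]
    exact integrable_toReal_of_lintegral_ne_top
      ((hNmeas t).mul (hNmeas t)).aemeasurable (hM_ne_top t t ht ht)
  · intro s t hs ht
    -- the real D-sum
    have hDtoReal : (∑' r, ENNReal.ofReal
        (Real.exp (-(p r) * max s t) - Real.exp (-(p r) * (s + t)))).toReal
        = ∑' r, (Real.exp (-(p r) * max s t) - Real.exp (-(p r) * (s + t))) := by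
      rw [ENNReal.tsum_toReal_eq (fun r => ENNReal.ofReal_ne_top)]
      refine tsum_congr fun r => ENNReal.toReal_ofReal ?_
      have hd : -(p r) * (s + t) ≤ -(p r) * max s t := by
        have := (hp r).le
        rcases le_total s t with h | h
        · rw [max_eq_right h]; nlinarith
        · rw [max_eq_left h]; nlinarith
      linarith [Real.exp_le_exp.mpr hd]
    have hPhi : Φ (s + t) - Φ (max s t)
        = ∑' r, (Real.exp (-(p r) * max s t) - Real.exp (-(p r) * (s + t))) := by
      have e1 : Φ (s + t) = ∑' r, (1 - Real.exp (-(p r) * (s + t))) := by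
        rw [hΦ]; exact tsum_congr fun r => by rw [show -(s + t) * p r = -(p r) * (s + t) by ring]
      have e2 : Φ (max s t) = ∑' r, (1 - Real.exp (-(p r) * max s t)) := by
        rw [hΦ]; exact tsum_congr fun r => by rw [show -(max s t) * p r = -(p r) * max s t by ring]
      rw [e1, e2, ← Summable.tsum_sub (hSum (s + t) (by linarith)) (hSum (max s t) (le_max_of_le_left hs))]
      exact tsum_congr fun r => by ring
    refine ⟨?_, ?_⟩
    · rw [hintKK s t hs ht, hintK s hs, hintK t ht, key s t hs ht,
        ENNReal.toReal_add (ENNReal.mul_ne_top (hA_ne_top s hs) (hA_ne_top t ht))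
          (hD_ne_top s t hs ht), ENNReal.toReal_mul, hPhi, hDtoReal]
      ring
    · rw [hPhi]
      exact tsum_congr fun r => by
        rw [show -(max s t) * p r = -(p r) * max s t by ring,
          show -(s + t) * p r = -(p r) * (s + t) by ring]
end

section
/- Under Condition (6), for integers 1 ≤ i < j and all u, v ∈ ℝ, define C(s,t) := ∑_{r₁∈ℕ^i} e^{−s p_{r₁}} ∑_{r₂∈ℕ^{j−i}} (e^{−max(t−s,0) p_{r₁} p_{r₂}} − e^{−t p_{r₁} p_{r₂}}) for s, t ≥ 0. Then lim_{T→∞} C(e^{T+u}, e^{T+v}) / ((Φ_i(2e^T) − Φ_i(e^T)) (Φ_j(2e^T) − Φ_j(e^T)))^{1/2} = 0. -/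
open Filter Topology

/-- Product weight of a box `r` in generation `j`: `p_r = p_{r 0} ⋯ p_{r (j-1)}`. -/
noncomputable def prodP (p : ℕ → ℝ) (j : ℕ) (r : Fin j → ℕ) : ℝ := ∏ i, p (r i)

/-- Counting function of generation `j`: `ρ_j(x) = #{r ∈ ℕ^j : p_r ≥ 1/x}` (as a real number). -/
noncomputable def rhoJ (p : ℕ → ℝ) (j : ℕ) (x : ℝ) : ℝ :=
  (Nat.card {r : Fin j → ℕ // 1 / x ≤ prodP p j r} : ℝ)

/-- Expected number of occupied boxes in generation `j` of the Poissonized scheme: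
`Φ_j(t) = ∑_{r ∈ ℕ^j} (1 - e^{-t p_r})`. -/
noncomputable def PhiJ (p : ℕ → ℝ) (j : ℕ) (t : ℝ) : ℝ :=
  ∑' r : Fin j → ℕ, (1 - Real.exp (-t * prodP p j r))

/-- Cross-generation covariance:
`C(s,t) = ∑_{r₁∈ℕ^i} e^{-s p_{r₁}} ∑_{r₂∈ℕ^m} (e^{-max(t-s,0) p_{r₁} p_{r₂}} - e^{-t p_{r₁} p_{r₂}})`. -/
noncomputable def crossCov (p : ℕ → ℝ) (i m : ℕ) (s t : ℝ) : ℝ :=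
  ∑' r₁ : Fin i → ℕ, Real.exp (-s * prodP p i r₁) *
    ∑' r₂ : Fin m → ℕ,
      (Real.exp (-(max (t - s) 0) * (prodP p i r₁ * prodP p m r₂)) -
        Real.exp (-t * (prodP p i r₁ * prodP p m r₂)))

namespace Stmt7

open Filter Topology MeasureTheory Set

/-- the basic variance kernel -/
noncomputable def fV (x : ℝ) : ℝ := Real.exp (-x) - Real.exp (-(2*x))

/-- variance of generation j -/
noncomputable def V (p : ℕ → ℝ) (j : ℕ) (t : ℝ) : ℝ :=
  ∑' r : Fin j → ℕ, fV (t * prodP p j r)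

/-- normalizing function -/
noncomputable def G (p : ℕ → ℝ) (t : ℝ) : ℝ := rhoJ p 1 (2*t) - rhoJ p 1 t

lemma fV_nonneg {x : ℝ} (hx : 0 ≤ x) : 0 ≤ fV x := by
  have : Real.exp (-(2*x)) ≤ Real.exp (-x) := Real.exp_le_exp.2 (by linarith)
  simp [fV]; linarith

lemma fV_pos {x : ℝ} (hx : 0 < x) : 0 < fV x := by
  have : Real.exp (-(2*x)) < Real.exp (-x) := Real.exp_lt_exp.2 (by linarith)
  simp [fV]; linarith

lemma exp_neg_sq (x : ℝ) : Real.exp (-(2*x)) = Real.exp (-x) * Real.exp (-x) := by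
  rw [← Real.exp_add]; ring_nf

lemma fV_le {x : ℝ} (hx : 0 ≤ x) : fV x ≤ x := by
  have h1 : Real.exp (-x) ≤ 1 := Real.exp_le_one_iff.2 (by linarith)
  have h2 : 0 ≤ Real.exp (-x) := (Real.exp_pos _).le
  have h3 : -x + 1 ≤ Real.exp (-x) := Real.add_one_le_exp (-x)
  rw [fV, exp_neg_sq]
  nlinarith

lemma mul_exp_le_fV_half {x : ℝ} (hx : 0 ≤ x) : x * Real.exp (-x) ≤ 2 * fV (x/2) := by
  have hb : 0 < Real.exp (-(x/2)) := Real.exp_pos _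
  have key : (x/2) * Real.exp (-(x/2)) ≤ 1 - Real.exp (-(x/2)) := by
    have h := Real.add_one_le_exp (x/2)
    have h2 : (x/2 + 1) * Real.exp (-(x/2)) ≤ Real.exp (x/2) * Real.exp (-(x/2)) :=
      mul_le_mul_of_nonneg_right h hb.le
    rw [← Real.exp_add] at h2
    simp at h2
    linarith
  have hxx : Real.exp (-x) = Real.exp (-(x/2)) * Real.exp (-(x/2)) := by
    rw [← Real.exp_add]; ring_nf
  have h2 : fV (x/2) = Real.exp (-(x/2)) - Real.exp (-x) := by
    rw [fV]; ring_nf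
  rw [h2, hxx]
  nlinarith

lemma fV_ge {x : ℝ} (h0 : 0 ≤ x) (h1 : x ≤ 1) : x * Real.exp (-2) ≤ fV x := by
  have ha : 0 < Real.exp (-x) := Real.exp_pos _
  have key : x * Real.exp (-x) ≤ 1 - Real.exp (-x) := by
    have h := Real.add_one_le_exp x
    have h2 : (x + 1) * Real.exp (-x) ≤ Real.exp x * Real.exp (-x) :=
      mul_le_mul_of_nonneg_right h ha.le
    rw [← Real.exp_add] at h2
    simp at h2
    linarith
  have h3 : Real.exp (-2) ≤ Real.exp (-(2*x)) := Real.exp_le_exp.2 (by linarith)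
  have haa : Real.exp (-x) * Real.exp (-x) = Real.exp (-(2*x)) := (exp_neg_sq x).symm
  have h4 : Real.exp (-x) * (x * Real.exp (-x)) ≤ Real.exp (-x) * (1 - Real.exp (-x)) :=
    mul_le_mul_of_nonneg_left key ha.le
  have h5 : x * Real.exp (-2) ≤ x * (Real.exp (-x) * Real.exp (-x)) := by
    rw [haa]; exact mul_le_mul_of_nonneg_left h3 h0
  rw [fV, exp_neg_sq]
  nlinarith

section withP
variable {p : ℕ → ℝ}

lemma summable_p (hp1 : ∑' k, p k = 1) : Summable p := by
  by_contra h
  rw [tsum_eq_zero_of_not_summable h] at hp1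
  norm_num at hp1

lemma prodP_nonneg (hp0 : ∀ k, 0 ≤ p k) (j : ℕ) (r : Fin j → ℕ) : 0 ≤ prodP p j r :=
  Finset.prod_nonneg fun i _ => hp0 _

/-- cons equivalence -/
def econs (n : ℕ) : (ℕ × (Fin n → ℕ)) ≃ (Fin (n+1) → ℕ) := Fin.consEquiv (fun _ => ℕ)

/-- splitting equivalence -/
def esplit (a b : ℕ) : (Fin (a+b) → ℕ) ≃ (Fin a → ℕ) × (Fin b → ℕ) :=
  (Equiv.arrowCongr finSumFinEquiv (Equiv.refl ℕ)).symm.trans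
    (Equiv.sumArrowEquivProdArrow _ _ _)

lemma prodP_esplit (a b : ℕ) (r : Fin (a+b) → ℕ) :
    prodP p (a+b) r = prodP p a ((esplit a b) r).1 * prodP p b ((esplit a b) r).2 := by
  have : prodP p (a+b) r = ∏ s : Fin a ⊕ Fin b, p (r (finSumFinEquiv s)) := by
    rw [prodP, ← finSumFinEquiv.prod_comp]
  rw [this, Fintype.prod_sum_type]
  rfl

lemma summable_prodP (hp0 : ∀ k, 0 ≤ p k) (hp1 : ∑' k, p k = 1) (j : ℕ) :
    Summable (prodP p j) ∧ ∑' r : Fin j → ℕ, prodP p j r = 1 := by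
  induction j with
  | zero =>
    constructor
    · exact Summable.of_finite
    · rw [tsum_eq_single (default : Fin 0 → ℕ) (fun b hb => absurd (Subsingleton.elim b default) hb)]
      simp [prodP]
  | succ n ih =>
    have hps := summable_p hp1
    set e : (ℕ × (Fin n → ℕ)) ≃ (Fin (n+1) → ℕ) := econs n with he_def
    have hcomp : ∀ q : ℕ × (Fin n → ℕ), prodP p (n+1) (e q) = p q.1 * prodP p n q.2 := by
      rintro ⟨k, r⟩
      have he : e (k, r) = Fin.cons (α := fun _ => ℕ) k r := by
        rw [he_def]; rfl
      have hfun : (fun i => p (Fin.cons (α := fun _ => ℕ) k r i))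
          = Fin.cons (α := fun _ => ℝ) (p k) (fun i => p (r i)) := by
        funext i
        refine Fin.cases ?_ (fun j => ?_) i <;> simp
      rw [prodP, he]
      calc (∏ i, p (Fin.cons (α := fun _ => ℕ) k r i))
          = ∏ i, Fin.cons (α := fun _ => ℝ) (p k) (fun i => p (r i)) i := by rw [hfun]
        _ = p k * ∏ i, p (r i) := Fin.prod_cons _ _
        _ = _ := rfl
    have hsum2 : Summable (fun q : ℕ × (Fin n → ℕ) => p q.1 * prodP p n q.2) :=
      Summable.mul_of_nonneg hps ih.1 hp0 (fun r => prodP_nonneg hp0 n r)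
    have hs : Summable (prodP p (n+1)) := by
      rw [← e.summable_iff]
      exact hsum2.congr fun q => (hcomp q).symm
    refine ⟨hs, ?_⟩
    have h1 : ∑' r : Fin (n+1) → ℕ, prodP p (n+1) r
        = ∑' q : ℕ × (Fin n → ℕ), (p q.1 * prodP p n q.2) := by
      rw [← e.tsum_eq]
      exact tsum_congr hcomp
    have h2 : ∑' q : ℕ × (Fin n → ℕ), (p q.1 * prodP p n q.2)
        = ∑' k : ℕ, ∑' r : Fin n → ℕ, p k * prodP p n r :=
      Summable.tsum_prod' hsum2 (fun k => ih.1.mul_left (p k))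
    rw [h1, h2]
    have h3 : ∀ k : ℕ, ∑' r : Fin n → ℕ, p k * prodP p n r = p k := by
      intro k
      rw [tsum_mul_left, ih.2, mul_one]
    rw [tsum_congr h3, hp1]

lemma summable_fV (hp0 : ∀ k, 0 ≤ p k) (hp1 : ∑' k, p k = 1) (j : ℕ) {t : ℝ} (ht : 0 ≤ t) :
    Summable (fun r : Fin j → ℕ => fV (t * prodP p j r)) := by
  refine Summable.of_nonneg_of_le
    (fun r => fV_nonneg (mul_nonneg ht (prodP_nonneg hp0 j r)))
    (fun r => fV_le (mul_nonneg ht (prodP_nonneg hp0 j r)))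
    (((summable_prodP hp0 hp1 j).1).mul_left t)

lemma V_nonneg (hp0 : ∀ k, 0 ≤ p k) (j : ℕ) {t : ℝ} (ht : 0 ≤ t) : 0 ≤ V p j t :=
  tsum_nonneg fun r => fV_nonneg (mul_nonneg ht (prodP_nonneg hp0 j r))

lemma V_le (hp0 : ∀ k, 0 ≤ p k) (hp1 : ∑' k, p k = 1) (j : ℕ) {t : ℝ} (ht : 0 ≤ t) :
    V p j t ≤ t := by
  have h := Summable.tsum_le_tsum (f := fun r : Fin j → ℕ => fV (t * prodP p j r))
    (g := fun r => t * prodP p j r)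
    (fun r => fV_le (mul_nonneg ht (prodP_nonneg hp0 j r))) (summable_fV hp0 hp1 j ht)
    (((summable_prodP hp0 hp1 j).1).mul_left t)
  rw [tsum_mul_left, (summable_prodP hp0 hp1 j).2, mul_one] at h
  exact h

lemma V_pos (hp0 : ∀ k, 0 ≤ p k) (hp1 : ∑' k, p k = 1) (hpinf : {k | 0 < p k}.Infinite)
    (j : ℕ) {t : ℝ} (ht : 0 < t) : 0 < V p j t := by
  obtain ⟨k₀, hk₀⟩ := hpinf.nonempty
  have hk₀' : 0 < p k₀ := hk₀
  refine Summable.tsum_pos (summable_fV hp0 hp1 j ht.le)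
    (fun r => fV_nonneg (mul_nonneg ht.le (prodP_nonneg hp0 j r)))
    (fun _ => k₀) (fV_pos ?_)
  have hprod : prodP p j (fun _ => k₀) = p k₀ ^ j := by
    rw [prodP, Finset.prod_const, Finset.card_univ, Fintype.card_fin]
  rw [hprod]
  exact mul_pos ht (pow_pos hk₀' j)

lemma V_split (hp0 : ∀ k, 0 ≤ p k) (hp1 : ∑' k, p k = 1) (a b : ℕ) {t : ℝ} (ht : 0 ≤ t) :
    V p (a+b) t = ∑' r₁ : Fin a → ℕ, V p b (t * prodP p a r₁) := by
  have hnn : ∀ q : (Fin a → ℕ) × (Fin b → ℕ), 0 ≤ t * (prodP p a q.1 * prodP p b q.2) :=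
    fun q => mul_nonneg ht (mul_nonneg (prodP_nonneg hp0 a q.1) (prodP_nonneg hp0 b q.2))
  have hsum : Summable (fun q : (Fin a → ℕ) × (Fin b → ℕ) =>
      fV (t * (prodP p a q.1 * prodP p b q.2))) := by
    refine Summable.of_nonneg_of_le (fun q => fV_nonneg (hnn q))
      (fun q => fV_le (hnn q)) ?_
    exact (Summable.mul_of_nonneg (summable_prodP hp0 hp1 a).1 (summable_prodP hp0 hp1 b).1
      (fun r => prodP_nonneg hp0 a r) (fun r => prodP_nonneg hp0 b r)).mul_left t
  have h1 : V p (a+b) t = ∑' q : (Fin a → ℕ) × (Fin b → ℕ),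
      fV (t * (prodP p a q.1 * prodP p b q.2)) := by
    rw [V, ← (esplit a b).symm.tsum_eq]
    refine tsum_congr fun q => ?_
    have := prodP_esplit a b ((esplit a b).symm q) (p := p)
    rw [Equiv.apply_symm_apply] at this
    rw [this]
  have hfib : ∀ r₁ : Fin a → ℕ,
      Summable (fun r₂ : Fin b → ℕ => fV (t * (prodP p a r₁ * prodP p b r₂))) := by
    intro r₁
    refine Summable.of_nonneg_of_le (fun r₂ => fV_nonneg (hnn (r₁, r₂)))
      (fun r₂ => fV_le (hnn (r₁, r₂))) ?_
    exact ((summable_prodP hp0 hp1 b).1.mul_left (t * prodP p a r₁)).congr (fun r₂ => by ring)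
  rw [h1, Summable.tsum_prod' hsum hfib]
  refine tsum_congr fun r₁ => ?_
  rw [V]
  refine tsum_congr fun r₂ => ?_
  congr 1
  ring

lemma V_one_eq (t : ℝ) : V p 1 t = ∑' k : ℕ, fV (t * p k) := by
  rw [V, ← (Equiv.funUnique (Fin 1) ℕ).symm.tsum_eq]
  refine tsum_congr fun k => ?_
  congr 1
  simp [prodP]

lemma V_one_le (hp0 : ∀ k, 0 ≤ p k) (hp1 : ∑' k, p k = 1) {x : ℝ} (hx : 0 ≤ x) :
    V p 1 x ≤ x := V_le hp0 hp1 1 hx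

lemma Phi_diff (hp0 : ∀ k, 0 ≤ p k) (hp1 : ∑' k, p k = 1) (j : ℕ) {t : ℝ} (ht : 0 ≤ t) :
    PhiJ p j (2*t) - PhiJ p j t = V p j t := by
  have hs : ∀ {s : ℝ}, 0 ≤ s → Summable (fun r : Fin j → ℕ => 1 - Real.exp (-s * prodP p j r)) := by
    intro s hs
    refine Summable.of_nonneg_of_le (fun r => by
        have : Real.exp (-s * prodP p j r) ≤ 1 := Real.exp_le_one_iff.2 (by
          have := prodP_nonneg hp0 j r; nlinarith)
        linarith)
      (fun r => ?_) (((summable_prodP hp0 hp1 j).1).mul_left s)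
    have h3 := Real.add_one_le_exp (-s * prodP p j r)
    linarith
  rw [PhiJ, PhiJ, ← Summable.tsum_sub (hs (by linarith)) (hs ht)]
  refine tsum_congr fun r => ?_
  rw [fV]
  have e1 : -(2*t) * prodP p j r = -(2*(t * prodP p j r)) := by ring
  have e2 : -t * prodP p j r = -(t * prodP p j r) := by ring
  rw [e1, e2]
  ring

end withP
section rhoFacts
variable {p : ℕ → ℝ}

lemma rho_eq (p : ℕ → ℝ) (x : ℝ) : rhoJ p 1 x = (({k : ℕ | 1/x ≤ p k}).ncard : ℝ) := by
  rw [rhoJ, ← Nat.card_coe_set_eq]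
  congr 1
  refine Nat.card_congr (Equiv.subtypeEquiv (Equiv.funUnique (Fin 1) ℕ) fun r => ?_)
  have : prodP p 1 r = p (r 0) := by simp [prodP]
  rw [this]
  rfl

lemma finite_ge (hp1 : ∑' k, p k = 1) {c : ℝ} (hc : 0 < c) : {k : ℕ | c ≤ p k}.Finite := by
  have h := (summable_p hp1).tendsto_cofinite_zero
  have h2 : ∀ᶠ k in Filter.cofinite, p k < c := h.eventually (eventually_lt_nhds hc)
  rw [Filter.eventually_cofinite] at h2
  exact h2.subset fun k hk => by simp only [Set.mem_setOf_eq] at hk ⊢; linarith [hk]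

lemma rho_zero (hp0 : ∀ k, 0 ≤ p k) {x : ℝ} (hx : x ≤ 0) : rhoJ p 1 x = 0 := by
  rw [rho_eq]
  have : {k : ℕ | 1/x ≤ p k} = Set.univ := by
    ext k
    simp only [Set.mem_setOf_eq, Set.mem_univ, iff_true]
    have : 1/x ≤ 0 := by
      rcases lt_or_eq_of_le hx with h | h
      · exact le_of_lt (div_neg_of_pos_of_neg one_pos h)
      · simp [h]
    linarith [hp0 k]
  rw [this, Set.ncard_univ]
  simp [Set.Infinite.card_eq_zero (Set.infinite_univ (α := ℕ))]

lemma rho_nonneg (p : ℕ → ℝ) (x : ℝ) : 0 ≤ rhoJ p 1 x := by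
  rw [rho_eq]; positivity

lemma rho_mono (hp0 : ∀ k, 0 ≤ p k) (hp1 : ∑' k, p k = 1) : Monotone (rhoJ p 1) := by
  intro x y hxy
  rcases le_or_gt y 0 with hy | hy
  · rw [rho_zero hp0 (hxy.trans hy), rho_zero hp0 hy]
  rcases le_or_gt x 0 with hx | hx
  · rw [rho_zero hp0 hx]; exact rho_nonneg p y
  rw [rho_eq, rho_eq]
  have hsub : {k : ℕ | 1/x ≤ p k} ⊆ {k : ℕ | 1/y ≤ p k} := by
    intro k hk
    simp only [Set.mem_setOf_eq] at hk ⊢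
    calc 1/y ≤ 1/x := one_div_le_one_div_of_le hx hxy
    _ ≤ p k := hk
  exact_mod_cast Set.ncard_le_ncard hsub (finite_ge hp1 (by positivity))

/-- integrality of G -/
lemma G_nat (hp0 : ∀ k, 0 ≤ p k) (hp1 : ∑' k, p k = 1) {t : ℝ} (ht : 0 < t) :
    G p t = (({k : ℕ | 1/(2*t) ≤ p k} \ {k : ℕ | 1/t ≤ p k}).ncard : ℝ) := by
  have hsub : {k : ℕ | 1/t ≤ p k} ⊆ {k : ℕ | 1/(2*t) ≤ p k} := by
    intro k hk
    simp only [Set.mem_setOf_eq] at hk ⊢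
    calc 1/(2*t) ≤ 1/t := by
          apply one_div_le_one_div_of_le ht; linarith
    _ ≤ p k := hk
  rw [G, rho_eq, rho_eq, Set.ncard_diff hsub (finite_ge hp1 (by positivity))]
  have hle : {k : ℕ | 1/t ≤ p k}.ncard ≤ {k : ℕ | 1/(2*t) ≤ p k}.ncard :=
    Set.ncard_le_ncard hsub (finite_ge hp1 (by positivity))
  rw [Nat.cast_sub hle]

lemma G_nonneg (hp0 : ∀ k, 0 ≤ p k) (hp1 : ∑' k, p k = 1) (t : ℝ) : 0 ≤ G p t := by
  rw [G]
  rcases le_or_gt t 0 with ht | ht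
  · have h2 : 2*t ≤ 0 := by linarith
    rw [rho_zero hp0 ht, rho_zero hp0 h2]; simp
  · have h : rhoJ p 1 t ≤ rhoJ p 1 (2*t) := rho_mono hp0 hp1 (by linarith)
    linarith

end rhoFacts

section GFacts
variable {p : ℕ → ℝ} {β : ℝ} {ℓ : ℝ → ℝ}

/-- The two key facts about G derived from Condition (6). -/
lemma G_props (hp0 : ∀ k, 0 ≤ p k) (hp1 : ∑' k, p k = 1)
    (hℓpos : ∀ x > 0, 0 < ℓ x)
    (h6 : ∀ lam > 0, Filter.Tendsto
      (fun t => (rhoJ p 1 (lam * t) - rhoJ p 1 t) / (Real.log t ^ β * ℓ (Real.log t)))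
      Filter.atTop (𝓝 (Real.log lam))) :
    (∀ q > 0, Filter.Tendsto (fun t => G p (q*t) / G p t) Filter.atTop (𝓝 1))
      ∧ (∀ᶠ t in Filter.atTop, 1 ≤ G p t) := by
  set L : ℝ → ℝ := fun t => Real.log t ^ β * ℓ (Real.log t) with hL_def
  have hLpos : ∀ᶠ t in Filter.atTop, 0 < L t := by
    filter_upwards [Filter.eventually_gt_atTop 1] with t ht
    have hlog : 0 < Real.log t := Real.log_pos ht
    exact mul_pos (Real.rpow_pos_of_pos hlog β) (hℓpos _ hlog)
  have hlog2 : (0:ℝ) < Real.log 2 := Real.log_pos (by norm_num)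
  have hG : Filter.Tendsto (fun t => G p t / L t) Filter.atTop (𝓝 (Real.log 2)) := by
    have := h6 2 (by norm_num)
    exact this.congr fun t => by rw [G]
  have hGpos : ∀ᶠ t in Filter.atTop, 0 < G p t := by
    have h2 : ∀ᶠ t in Filter.atTop, Real.log 2 / 2 < G p t / L t :=
      hG.eventually (eventually_gt_nhds (by linarith))
    filter_upwards [h2, hLpos] with t h2 hL
    by_contra hc
    push_neg at hc
    have : G p t / L t ≤ 0 := div_nonpos_of_nonpos_of_nonneg hc hL.le
    nlinarith
  -- ratio of increments
  have hF2 : ∀ lam > 0, Filter.Tendsto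
      (fun t => (rhoJ p 1 (lam * t) - rhoJ p 1 t) / G p t) Filter.atTop
      (𝓝 (Real.log lam / Real.log 2)) := by
    intro lam hlam
    have hdiv := (h6 lam hlam).div hG (ne_of_gt hlog2)
    refine hdiv.congr' ?_
    filter_upwards [hLpos, hGpos] with t hL hGt
    have hL' := ne_of_gt hL
    have hG' := ne_of_gt hGt
    simp only [Pi.div_apply]; field_simp; rw [div_eq_iff (show Real.log t ^ β * ℓ (Real.log t) ≠ 0 from hL')]
  constructor
  · intro q hq
    have h2q := hF2 (2*q) (by positivity)
    have hq' := hF2 q hq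
    have := h2q.sub hq'
    have heq : (fun t => (rhoJ p 1 ((2*q) * t) - rhoJ p 1 t) / G p t
        - (rhoJ p 1 (q * t) - rhoJ p 1 t) / G p t) = fun t => G p (q*t) / G p t := by
      funext t
      rw [div_sub_div_same]
      congr 1
      rw [G, show 2 * q * t = 2 * (q*t) by ring]
      ring
    rw [heq] at this
    have hval : Real.log (2*q) / Real.log 2 - Real.log q / Real.log 2 = 1 := by
      rw [Real.log_mul (by norm_num) (ne_of_gt hq), div_sub_div_same]
      field_simp; ring
    rwa [hval] at this
  · filter_upwards [hGpos, Filter.eventually_gt_atTop 0] with t hGt ht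
    rw [G_nat hp0 hp1 ht] at hGt ⊢
    exact_mod_cast Nat.one_le_iff_ne_zero.mpr (by exact_mod_cast ne_of_gt hGt)

end GFacts

section Potter
variable {p : ℕ → ℝ}

lemma exists_dyadic {z : ℝ} (hz : 1 ≤ z) : ∃ m : ℕ, (2:ℝ)^m ≤ z ∧ z < 2^(m+1) := by
  refine ⟨⌊Real.logb 2 z⌋₊, ?_, ?_⟩
  · have hlb0 : 0 ≤ Real.logb 2 z := Real.logb_nonneg (by norm_num) hz
    calc ((2:ℝ))^(⌊Real.logb 2 z⌋₊) = (2:ℝ)^((⌊Real.logb 2 z⌋₊ : ℝ)) :=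
          (Real.rpow_natCast 2 _).symm
    _ ≤ (2:ℝ)^(Real.logb 2 z) := Real.rpow_le_rpow_of_exponent_le (by norm_num) (Nat.floor_le hlb0)
    _ = z := Real.rpow_logb (by norm_num) (by norm_num) (by linarith)
  · have h := Nat.lt_floor_add_one (Real.logb 2 z)
    calc z = (2:ℝ)^(Real.logb 2 z) := (Real.rpow_logb (by norm_num) (by norm_num) (by linarith)).symm
    _ < (2:ℝ)^((⌊Real.logb 2 z⌋₊ : ℝ) + 1) := Real.rpow_lt_rpow_of_exponent_lt (by norm_num) h
    _ = (2:ℝ)^(⌊Real.logb 2 z⌋₊ + 1) := by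
        rw [show ((⌊Real.logb 2 z⌋₊ : ℝ) + 1) = ((⌊Real.logb 2 z⌋₊ + 1 : ℕ) : ℝ) by push_cast; ring,
          Real.rpow_natCast]

lemma G_potter (hp0 : ∀ k, 0 ≤ p k) (hp1 : ∑' k, p k = 1)
    (hGsv : ∀ q > 0, Filter.Tendsto (fun t => G p (q*t) / G p t) Filter.atTop (𝓝 1))
    (hG1 : ∀ᶠ t in Filter.atTop, 1 ≤ G p t) :
    ∃ C s₁ : ℝ, 0 < C ∧ 1 ≤ s₁ ∧ (∀ t, s₁ ≤ t → 1 ≤ G p t) ∧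
      ∀ t, s₁ ≤ t → ∀ y, 0 < y →
        G p (t/y) ≤ C * (Real.sqrt y + 1/Real.sqrt y) * G p t := by
  set r := Real.sqrt 2 with hr_def
  have hr0 : 0 < r := Real.sqrt_pos.2 (by norm_num)
  have hr1 : 1 < r := by
    rw [hr_def, show (1:ℝ) = Real.sqrt 1 by simp]
    exact Real.sqrt_lt_sqrt (by norm_num) (by norm_num)
  have hkey : ∀ m : ℕ, (r:ℝ)^m = Real.sqrt (2^m) := by
    intro m
    induction m with
    | zero => simp
    | succ n ih =>
      rw [pow_succ, ih, hr_def, ← Real.sqrt_mul (by positivity), pow_succ]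
  have e1 := (hGsv 2 (by norm_num)).eventually (eventually_le_nhds hr1)
  have e2 := (hGsv (1/2) (by norm_num)).eventually (eventually_le_nhds hr1)
  obtain ⟨s₀, hs₀⟩ := Filter.eventually_atTop.1 ((e1.and e2).and hG1)
  set s₁ := max s₀ 1 with hs₁_def
  have hs₁1 : (1:ℝ) ≤ s₁ := le_max_right _ _
  have hbase : ∀ t, s₁ ≤ t → (G p (2*t) ≤ r * G p t ∧ G p (t/2) ≤ r * G p t) ∧ 1 ≤ G p t := by
    intro t ht
    have h := hs₀ t ((le_max_left _ _).trans ht)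
    have hGpos : (0:ℝ) < G p t := lt_of_lt_of_le one_pos h.2
    refine ⟨⟨?_, ?_⟩, h.2⟩
    · have h11 := h.1.1
      calc G p (2*t) = (G p (2*t) / G p t) * G p t := by field_simp
      _ ≤ r * G p t := mul_le_mul_of_nonneg_right h11 hGpos.le
    · have h12 := h.1.2
      rw [show (1:ℝ)/2 * t = t/2 by ring] at h12
      calc G p (t/2) = (G p (t/2) / G p t) * G p t := by field_simp
      _ ≤ r * G p t := mul_le_mul_of_nonneg_right h12 hGpos.le
  have hG1' : ∀ t, s₁ ≤ t → 1 ≤ G p t := fun t ht => (hbase t ht).2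
  have htpos : ∀ t : ℝ, s₁ ≤ t → 0 < t := fun t ht => lt_of_lt_of_le one_pos (hs₁1.trans ht)
  have up : ∀ m : ℕ, ∀ t, s₁ ≤ t → G p (2^m * t) ≤ r^m * G p t := by
    intro m
    induction m with
    | zero => intro t ht; simp
    | succ n ih =>
      intro t ht
      have h2nt : s₁ ≤ 2^n * t := by
        have h1 : (1:ℝ) ≤ 2^n := one_le_pow₀ (by norm_num : (1:ℝ) ≤ 2)
        nlinarith [htpos t ht]
      have step := ((hbase (2^n * t) h2nt).1).1
      calc G p (2^(n+1) * t) = G p (2 * (2^n * t)) := by ring_nf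
      _ ≤ r * G p (2^n * t) := step
      _ ≤ r * (r^n * G p t) := mul_le_mul_of_nonneg_left (ih t ht) hr0.le
      _ = r^(n+1) * G p t := by ring
  have down : ∀ m : ℕ, ∀ t, s₁ ≤ t/2^m → G p (t/2^m) ≤ r^m * G p t := by
    intro m
    induction m with
    | zero => intro t ht; simp
    | succ n ih =>
      intro t ht
      have key : t/2^n = 2 * (t/2^(n+1)) := by
        rw [pow_succ]; ring
      have h1 : s₁ ≤ t/2^n := by
        rw [key]; nlinarith [hs₁1.trans ht]
      have step := ((hbase (t/2^n) h1).1).2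
      have harg : (t/2^n)/2 = t/2^(n+1) := by
        rw [pow_succ]; ring
      rw [harg] at step
      calc G p (t/2^(n+1)) ≤ r * G p (t/2^n) := step
      _ ≤ r * (r^n * G p t) := mul_le_mul_of_nonneg_left (ih t h1) hr0.le
      _ = r^(n+1) * G p t := by ring
  have bridge : ∀ x, s₁ ≤ x → ∀ c : ℝ, 1 ≤ c → c ≤ 2 → G p (c*x) ≤ (r+1) * G p x := by
    intro x hx c hc1 hc2
    have hxpos : 0 < x := htpos x hx
    have m1 : rhoJ p 1 (2*(c*x)) ≤ rhoJ p 1 (2*(2*x)) := by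
      apply rho_mono hp0 hp1; nlinarith
    have m2 : rhoJ p 1 x ≤ rhoJ p 1 (c*x) := by
      apply rho_mono hp0 hp1; nlinarith
    have step := ((hbase x hx).1).1
    have hGx : G p (c*x) ≤ G p (2*x) + G p x := by
      rw [G, G, G]; linarith
    linarith [hGx, step]
  refine ⟨(r+1)*r + rhoJ p 1 (4*s₁) + 1, s₁, by nlinarith [rho_nonneg p (4*s₁)], hs₁1, hG1', ?_⟩
  set C := (r+1)*r + rhoJ p 1 (4*s₁) + 1 with hC_def
  have hCpos : 0 < C := by nlinarith [rho_nonneg p (4*s₁)]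
  have hCge : r + 1 ≤ C := by nlinarith [rho_nonneg p (4*s₁)]
  have hCge2 : (r+1)*r ≤ C := by nlinarith [rho_nonneg p (4*s₁)]
  intro t ht y hy
  have htp : 0 < t := htpos t ht
  have hGt1 : 1 ≤ G p t := hG1' t ht
  have hG0 : 0 ≤ G p t := le_trans zero_le_one hGt1
  have hsy : 0 < Real.sqrt y := Real.sqrt_pos.2 hy
  rcases le_or_gt y 1 with hy1 | hy1
  · -- y ≤ 1 : upward case
    have h1y : 1 ≤ 1/y := by rw [le_div_iff₀ hy]; linarith
    obtain ⟨m, hm1, hm2⟩ := exists_dyadic h1y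
    have h2mpos : (0:ℝ) < 2^m := by positivity
    set c := (1/y)/2^m with hc_def
    have hc1 : 1 ≤ c := (le_div_iff₀ h2mpos).2 (by linarith)
    have hc2 : c ≤ 2 := by
      rw [hc_def, div_le_iff₀ h2mpos]
      have h4 : (2:ℝ)^(m+1) = 2 * 2^m := by ring
      linarith
    have harg : t/y = c * (2^m * t) := by
      rw [hc_def]
      field_simp
      skip
    have hx : s₁ ≤ 2^m * t := by
      have h1 : (1:ℝ) ≤ 2^m := one_le_pow₀ (by norm_num : (1:ℝ) ≤ 2)
      nlinarith
    have h5 : r^m ≤ 1/Real.sqrt y := by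
      rw [hkey m, show (1:ℝ)/Real.sqrt y = Real.sqrt (1/y) by
        rw [one_div, one_div, Real.sqrt_inv]]
      exact Real.sqrt_le_sqrt hm1
    have h6 : (1:ℝ)/Real.sqrt y ≤ Real.sqrt y + 1/Real.sqrt y :=
      le_add_of_nonneg_left (Real.sqrt_nonneg y)
    calc G p (t/y) = G p (c * (2^m*t)) := by rw [harg]
    _ ≤ (r+1) * G p (2^m*t) := bridge _ hx c hc1 hc2
    _ ≤ (r+1) * (r^m * G p t) := mul_le_mul_of_nonneg_left (up m t ht) (by linarith)
    _ ≤ (r+1) * ((1/Real.sqrt y) * G p t) :=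
        mul_le_mul_of_nonneg_left (mul_le_mul_of_nonneg_right h5 hG0) (by linarith)
    _ ≤ C * ((1/Real.sqrt y) * G p t) :=
        mul_le_mul_of_nonneg_right hCge (mul_nonneg (by positivity) hG0)
    _ ≤ C * ((Real.sqrt y + 1/Real.sqrt y) * G p t) :=
        mul_le_mul_of_nonneg_left (mul_le_mul_of_nonneg_right h6 hG0) hCpos.le
    _ = C * (Real.sqrt y + 1/Real.sqrt y) * G p t := (mul_assoc _ _ _).symm
  · -- y > 1
    obtain ⟨m, hm1, hm2⟩ := exists_dyadic hy1.le
    have h2mpos : (0:ℝ) < 2^m := by positivity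
    have h2m1pos : (0:ℝ) < 2^(m+1) := by positivity
    have hsqm : r^m ≤ Real.sqrt y := by
      rw [hkey m]; exact Real.sqrt_le_sqrt hm1
    have h1sy : 1 ≤ Real.sqrt y := by
      rw [show (1:ℝ) = Real.sqrt 1 by simp]
      exact Real.sqrt_le_sqrt (by linarith)
    have h6 : Real.sqrt y ≤ Real.sqrt y + 1/Real.sqrt y :=
      le_add_of_nonneg_right (by positivity)
    rcases le_or_gt (2^(m+1) * s₁) t with hA | hB
    · -- deep case : downward iteration
      have hw : s₁ ≤ t/2^(m+1) := (le_div_iff₀ h2m1pos).2 (by nlinarith)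
      set c := (2:ℝ)^(m+1)/y with hc_def
      have hc1 : 1 ≤ c := (le_div_iff₀ hy).2 (by linarith)
      have hc2 : c ≤ 2 := by
        rw [hc_def, div_le_iff₀ hy]
        have h4 : (2:ℝ)^(m+1) = 2 * 2^m := by ring
        linarith
      have harg : t/y = c * (t/2^(m+1)) := by
        rw [hc_def]
        field_simp
        skip
      calc G p (t/y) = G p (c * (t/2^(m+1))) := by rw [harg]
      _ ≤ (r+1) * G p (t/2^(m+1)) := bridge _ hw c hc1 hc2
      _ ≤ (r+1) * (r^(m+1) * G p t) := mul_le_mul_of_nonneg_left (down (m+1) t hw) (by linarith)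
      _ ≤ (r+1) * ((r * Real.sqrt y) * G p t) := by
          apply mul_le_mul_of_nonneg_left _ (by linarith)
          apply mul_le_mul_of_nonneg_right _ hG0
          calc r^(m+1) = r * r^m := by ring
          _ ≤ r * Real.sqrt y := mul_le_mul_of_nonneg_left hsqm hr0.le
      _ = (r+1)*r * (Real.sqrt y * G p t) := by ring
      _ ≤ C * (Real.sqrt y * G p t) :=
          mul_le_mul_of_nonneg_right hCge2 (mul_nonneg hsy.le hG0)
      _ ≤ C * ((Real.sqrt y + 1/Real.sqrt y) * G p t) :=
          mul_le_mul_of_nonneg_left (mul_le_mul_of_nonneg_right h6 hG0) hCpos.le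
      _ = C * (Real.sqrt y + 1/Real.sqrt y) * G p t := (mul_assoc _ _ _).symm
    · -- shallow case : constant bound
      have hbound : G p (t/y) ≤ rhoJ p 1 (4*s₁) := by
        have hty : t/y ≤ t/2^m := div_le_div_of_nonneg_left htp.le h2mpos hm1
        have h2 : t/2^m < 2*s₁ := by
          rw [div_lt_iff₀ h2mpos]
          have h4 : (2:ℝ)^(m+1) = 2 * 2^m := by ring
          nlinarith
        have hmono : rhoJ p 1 (2*(t/y)) ≤ rhoJ p 1 (4*s₁) := by
          apply rho_mono hp0 hp1; nlinarith
        have hnn := rho_nonneg p (t/y)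
        rw [G]; linarith
      have hs7 : 1 ≤ Real.sqrt y + 1/Real.sqrt y := le_trans h1sy h6
      calc G p (t/y) ≤ rhoJ p 1 (4*s₁) := hbound
      _ ≤ C * 1 * 1 := by
          have h8 : 0 ≤ (r+1)*r := mul_nonneg (by linarith) hr0.le
          rw [mul_one, mul_one, hC_def]
          linarith
      _ ≤ C * (Real.sqrt y + 1/Real.sqrt y) * G p t := by
          apply mul_le_mul _ hGt1 zero_le_one
          · exact mul_nonneg hCpos.le (by positivity)
          · exact mul_le_mul_of_nonneg_left hs7 hCpos.le

end Potter

section Repr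
variable {p : ℕ → ℝ}

lemma ncard_tsum {S : Set ℕ} (hS : S.Finite) :
    ∑' k : ℕ, S.indicator (fun _ => (1:ℝ)) k = (S.ncard : ℝ) := by
  rw [← tsum_subtype S (fun _ => (1:ℝ))]
  haveI := hS.to_subtype
  rw [tsum_const, Nat.card_coe_set_eq, nsmul_eq_mul, mul_one]

lemma fV_zero : fV 0 = 0 := by simp [fV]

lemma integral_Ioc_exp {a : ℝ} (ha : 0 ≤ a) :
    ∫ y in Set.Ioi (0:ℝ), (Set.Ioc a (2*a)).indicator (fun y => Real.exp (-y)) y = fV a := by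
  rcases eq_or_lt_of_le ha with h | h
  · rw [← h]
    norm_num [fV_zero]
  · have hsub : Set.Ioc a (2*a) ⊆ Set.Ioi (0:ℝ) := fun y hy => lt_trans h hy.1
    rw [MeasureTheory.setIntegral_indicator measurableSet_Ioc,
      Set.inter_eq_self_of_subset_right hsub,
      ← intervalIntegral.integral_of_le (by linarith : a ≤ 2*a)]
    have : ∫ y in a..(2*a), Real.exp (-y) = ∫ y in (-(2*a))..(-a), Real.exp y :=
      intervalIntegral.integral_comp_neg fun x => Real.exp x
    rw [this, integral_exp, fV]

lemma summable_fV1 (hp0 : ∀ k, 0 ≤ p k) (hp1 : ∑' k, p k = 1) {t : ℝ} (ht : 0 ≤ t) :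
    Summable (fun k : ℕ => fV (t * p k)) :=
  Summable.of_nonneg_of_le (fun k => fV_nonneg (mul_nonneg ht (hp0 k)))
    (fun k => fV_le (mul_nonneg ht (hp0 k))) ((summable_p hp1).mul_left t)

lemma V1_repr (hp0 : ∀ k, 0 ≤ p k) (hp1 : ∑' k, p k = 1) {t : ℝ} (ht : 0 < t) :
    V p 1 t = ∫ y in Set.Ioi (0:ℝ), Real.exp (-y) * G p (t/y) := by
  set F : ℕ → ℝ → ℝ :=
    fun k y => (Set.Ioc (t*p k) (2*(t*p k))).indicator (fun y => Real.exp (-y)) y with hF_def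
  have hFmeas : ∀ k, Measurable (F k) :=
    fun k => (Real.continuous_exp.comp continuous_neg).measurable.indicator measurableSet_Ioc
  have hFnn : ∀ k y, 0 ≤ F k y :=
    fun k y => Set.indicator_nonneg (fun y _ => (Real.exp_pos (-y)).le) y
  have hFint : ∀ k, MeasureTheory.Integrable (F k) (MeasureTheory.volume.restrict (Set.Ioi 0)) := by
    intro k
    refine MeasureTheory.Integrable.restrict ?_
    exact MeasureTheory.IntegrableOn.integrable_indicator
      ((Real.continuous_exp.comp continuous_neg).integrableOn_Ioc) measurableSet_Ioc
  have hFvals : ∀ k, ∫ y in Set.Ioi (0:ℝ), F k y = fV (t * p k) :=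
    fun k => integral_Ioc_exp (mul_nonneg ht.le (hp0 k))
  have hlint : ∑' k, ∫⁻ y, ‖F k y‖₊ ∂(MeasureTheory.volume.restrict (Set.Ioi 0)) ≠ ⊤ := by
    have hvals : ∀ k, ∫⁻ y, ‖F k y‖₊ ∂(MeasureTheory.volume.restrict (Set.Ioi 0))
        = ENNReal.ofReal (fV (t * p k)) := by
      intro k
      rw [← hFvals k]
      rw [MeasureTheory.ofReal_integral_eq_lintegral_ofReal (hFint k)
        (Filter.Eventually.of_forall (fun y => hFnn k y))]
      refine MeasureTheory.lintegral_congr fun y => ?_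
      rw [← enorm_eq_nnnorm, Real.enorm_eq_ofReal (hFnn k y)]
    rw [tsum_congr hvals, ← ENNReal.ofReal_tsum_of_nonneg
      (fun k => fV_nonneg (mul_nonneg ht.le (hp0 k))) (summable_fV1 hp0 hp1 ht.le)]
    exact ENNReal.ofReal_ne_top
  have hswap : ∫ y in Set.Ioi (0:ℝ), (∑' k, F k y)
      = ∑' k, ∫ y in Set.Ioi (0:ℝ), F k y :=
    MeasureTheory.integral_tsum (fun k => (hFmeas k).aestronglyMeasurable) hlint
  have hpt : ∀ y ∈ Set.Ioi (0:ℝ), (∑' k, F k y) = Real.exp (-y) * G p (t/y) := by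
    intro y hy
    have hy0 : 0 < y := hy
    have hty : 0 < t/y := div_pos ht hy0
    set A : Set ℕ := {k | 1/(2*(t/y)) ≤ p k} with hA_def
    set B : Set ℕ := {k | 1/(t/y) ≤ p k} with hB_def
    have hBA : B ⊆ A := by
      intro k hk
      simp only [hA_def, hB_def, Set.mem_setOf_eq] at hk ⊢
      have h1 : 1/(2*(t/y)) ≤ 1/(t/y) := by
        apply one_div_le_one_div_of_le hty; linarith
      linarith
    have hAfin : A.Finite := finite_ge hp1 (by positivity)
    have hmem : ∀ k, (y ∈ Set.Ioc (t*p k) (2*(t*p k))) ↔ (k ∈ A \ B) := by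
      intro k
      have h2t : (0:ℝ) < 2*t := by linarith
      have e1 : 1/(2*(t/y)) ≤ p k ↔ y ≤ 2*(t*p k) := by
        rw [show 1/(2*(t/y)) = y/(2*t) by field_simp, div_le_iff₀ h2t]
        constructor <;> intro h <;> nlinarith
      have e2 : 1/(t/y) ≤ p k ↔ y ≤ t * p k := by
        rw [show 1/(t/y) = y/t by field_simp, div_le_iff₀ ht]
        constructor <;> intro h <;> nlinarith
      simp only [Set.mem_Ioc, Set.mem_diff, hA_def, hB_def, Set.mem_setOf_eq, e1, e2]
      constructor
      · rintro ⟨h1, h2⟩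
        exact ⟨h2, not_le.2 h1⟩
      · rintro ⟨h1, h2⟩
        exact ⟨not_le.1 h2, h1⟩
    have hFform : ∀ k, F k y = Real.exp (-y) * (A \ B).indicator (fun _ => (1:ℝ)) k := by
      intro k
      simp only [hF_def]
      by_cases hk : k ∈ A \ B
      · rw [Set.indicator_of_mem ((hmem k).2 hk), Set.indicator_of_mem hk, mul_one]
      · rw [Set.indicator_of_notMem (fun hc => hk ((hmem k).1 hc)),
          Set.indicator_of_notMem hk, mul_zero]
    rw [tsum_congr hFform, tsum_mul_left, ncard_tsum (hAfin.diff : (A \ B).Finite)]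
    congr 1
    rw [Set.ncard_diff hBA (hAfin.subset hBA),
      Nat.cast_sub (Set.ncard_le_ncard hBA hAfin), G, rho_eq, rho_eq]
  calc V p 1 t = ∑' k, fV (t * p k) := V_one_eq t
  _ = ∑' k, ∫ y in Set.Ioi (0:ℝ), F k y := tsum_congr fun k => (hFvals k).symm
  _ = ∫ y in Set.Ioi (0:ℝ), (∑' k, F k y) := hswap.symm
  _ = ∫ y in Set.Ioi (0:ℝ), Real.exp (-y) * G p (t/y) :=
      MeasureTheory.setIntegral_congr_fun measurableSet_Ioi hpt

end Repr

section Core1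
variable {p : ℕ → ℝ}

lemma G_measurable (hp0 : ∀ k, 0 ≤ p k) (hp1 : ∑' k, p k = 1) : Measurable (G p) := by
  have h := (rho_mono hp0 hp1).measurable
  exact (h.comp (measurable_id.const_mul 2)).sub h

lemma core1 (hp0 : ∀ k, 0 ≤ p k) (hp1 : ∑' k, p k = 1)
    (hGsv : ∀ q > 0, Filter.Tendsto (fun t => G p (q*t) / G p t) Filter.atTop (𝓝 1))
    (hG1 : ∀ᶠ t in Filter.atTop, 1 ≤ G p t) :
    Filter.Tendsto (fun t => V p 1 t / G p t) Filter.atTop (𝓝 1) := by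
  obtain ⟨C, s₁, hC, hs₁, hG1', hpot⟩ := G_potter hp0 hp1 hGsv hG1
  set bound : ℝ → ℝ := fun y => Real.exp (-y) * (C * (Real.sqrt y + 1/Real.sqrt y)) with hbound_def
  -- integrability of the bound
  have hint : MeasureTheory.Integrable bound (MeasureTheory.volume.restrict (Set.Ioi 0)) := by
    have I1 := Real.GammaIntegral_convergent (show (0:ℝ) < 3/2 by norm_num)
    have I2 := Real.GammaIntegral_convergent (show (0:ℝ) < 1/2 by norm_num)
    have I3 : MeasureTheory.IntegrableOn
        (fun x : ℝ => C * (Real.exp (-x) * x ^ ((3/2:ℝ) - 1) + Real.exp (-x) * x ^ ((1/2:ℝ) - 1)))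
        (Set.Ioi 0) MeasureTheory.volume := (I1.add I2).const_mul C
    refine I3.congr_fun ?_ measurableSet_Ioi
    intro y hy
    have hy0 : (0:ℝ) < y := hy
    have e1 : y ^ ((3/2:ℝ) - 1) = Real.sqrt y := by
      rw [show (3/2:ℝ) - 1 = 1/2 by norm_num, Real.sqrt_eq_rpow]
    have e2 : y ^ ((1/2:ℝ) - 1) = 1/Real.sqrt y := by
      rw [show (1/2:ℝ) - 1 = -(1/2) by norm_num, Real.rpow_neg hy0.le, Real.sqrt_eq_rpow]
      exact (one_div _).symm
    rw [hbound_def]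
    simp only []
    rw [e1, e2]
    ring
  -- measurability
  have hmeas : ∀ t : ℝ, MeasureTheory.AEStronglyMeasurable
      (fun y => Real.exp (-y) * G p (t/y) / G p t)
      (MeasureTheory.volume.restrict (Set.Ioi 0)) := by
    intro t
    have h1 : Measurable fun y : ℝ => G p (t/y) := by
      simpa [div_eq_mul_inv, Function.comp_def] using (G_measurable hp0 hp1).comp (measurable_inv.const_mul t)
    exact (((Real.continuous_exp.comp continuous_neg).measurable.mul h1).div_const
      (G p t)).aestronglyMeasurable
  -- domination
  have hdom : ∀ᶠ t in Filter.atTop, ∀ᵐ y ∂(MeasureTheory.volume.restrict (Set.Ioi 0)),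
      ‖Real.exp (-y) * G p (t/y) / G p t‖ ≤ bound y := by
    filter_upwards [Filter.eventually_ge_atTop s₁] with t ht
    rw [MeasureTheory.ae_restrict_iff' measurableSet_Ioi]
    refine Filter.Eventually.of_forall fun y hy => ?_
    have hy0 : (0:ℝ) < y := hy
    have hGt : (1:ℝ) ≤ G p t := hG1' t ht
    have hGty : 0 ≤ G p (t/y) := G_nonneg hp0 hp1 _
    have hnn : 0 ≤ Real.exp (-y) * G p (t/y) / G p t := by positivity
    rw [Real.norm_eq_abs, abs_of_nonneg hnn]
    have hb := hpot t ht y hy0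
    rw [hbound_def]
    simp only []
    rw [div_le_iff₀ (by linarith : (0:ℝ) < G p t)] at *
    calc Real.exp (-y) * G p (t/y) ≤ Real.exp (-y) * (C * (Real.sqrt y + 1/Real.sqrt y) * G p t) :=
        mul_le_mul_of_nonneg_left hb (Real.exp_pos _).le
    _ = Real.exp (-y) * (C * (Real.sqrt y + 1/Real.sqrt y)) * G p t := by ring
  -- pointwise limit
  have hlim : ∀ᵐ y ∂(MeasureTheory.volume.restrict (Set.Ioi 0)),
      Filter.Tendsto (fun t => Real.exp (-y) * G p (t/y) / G p t) Filter.atTop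
        (𝓝 (Real.exp (-y))) := by
    rw [MeasureTheory.ae_restrict_iff' measurableSet_Ioi]
    refine Filter.Eventually.of_forall fun y hy => ?_
    have hy0 : (0:ℝ) < y := hy
    have h1 := hGsv (1/y) (by positivity)
    have h2 : Filter.Tendsto (fun t => G p (t/y) / G p t) Filter.atTop (𝓝 1) := by
      refine h1.congr fun t => ?_
      rw [show (1/y) * t = t/y by ring]
    have h3 := h2.const_mul (Real.exp (-y))
    rw [mul_one] at h3
    refine h3.congr fun t => ?_
    ring
  have hmain := MeasureTheory.tendsto_integral_filter_of_dominated_convergence bound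
    (Filter.Eventually.of_forall hmeas) hdom hint hlim
  have hval : ∫ y in Set.Ioi (0:ℝ), Real.exp (-y) = 1 := by
    rw [integral_exp_neg_Ioi]; simp
  rw [hval] at hmain
  refine hmain.congr' ?_
  filter_upwards [Filter.eventually_ge_atTop s₁, Filter.eventually_gt_atTop 0] with t ht ht0
  rw [V1_repr hp0 hp1 ht0, ← integral_div]

end Core1

section VqOne
variable {p : ℕ → ℝ}

lemma Vq_one (hp0 : ∀ k, 0 ≤ p k) (hp1 : ∑' k, p k = 1) (hpinf : {k | 0 < p k}.Infinite)
    (hGsv : ∀ q > 0, Filter.Tendsto (fun t => G p (q*t) / G p t) Filter.atTop (𝓝 1))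
    (hG1 : ∀ᶠ t in Filter.atTop, 1 ≤ G p t) :
    ∀ q > 0, Filter.Tendsto (fun t => V p 1 (q*t) / V p 1 t) Filter.atTop (𝓝 1) := by
  have hcore := core1 hp0 hp1 hGsv hG1
  intro q hq
  have hmap : Filter.Tendsto (fun t : ℝ => q*t) Filter.atTop Filter.atTop :=
    Filter.Tendsto.const_mul_atTop hq Filter.tendsto_id
  have h1 : Filter.Tendsto (fun t => V p 1 (q*t) / G p (q*t)) Filter.atTop (𝓝 1) :=
    hcore.comp hmap
  have h2 := hGsv q hq
  have h3 : Filter.Tendsto (fun t => G p t / V p 1 t) Filter.atTop (𝓝 1) := by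
    have := hcore.inv₀ one_ne_zero
    rw [inv_one] at this
    exact this.congr fun t => by rw [inv_div]
  have hprod := (h1.mul h2).mul h3
  rw [mul_one, mul_one] at hprod
  refine hprod.congr' ?_
  filter_upwards [hG1, hmap.eventually hG1, Filter.eventually_gt_atTop 0] with t hGt hGqt ht0
  have hV : 0 < V p 1 t := V_pos hp0 hp1 hpinf 1 ht0
  have hGt0 : G p t ≠ 0 := by linarith
  have hGqt0 : G p (q*t) ≠ 0 := by linarith
  field_simp

lemma V_ratio_zero (hp0 : ∀ k, 0 ≤ p k) (hp1 : ∑' k, p k = 1)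
    (hpinf : {k | 0 < p k}.Infinite) (a b : ℕ) (hb : 1 ≤ b)
    (hVa : ∀ q > 0, Filter.Tendsto (fun t => V p a (q*t) / V p a t) Filter.atTop (𝓝 1)) :
    Filter.Tendsto (fun t => V p a t / V p (b+a) t) Filter.atTop (𝓝 0) := by
  rw [NormedAddCommGroup.tendsto_nhds_zero]
  intro ε hε
  set N : ℕ := ⌈2/ε⌉₊ + 1 with hN_def
  have hNpos : (0:ℝ) < N := by positivity
  have hNε : 2/(N:ℝ) < ε := by
    rw [div_lt_iff₀ hNpos]
    have h1 : 2/ε < (N:ℝ) := by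
      calc 2/ε ≤ (⌈2/ε⌉₊ : ℝ) := Nat.le_ceil _
      _ < N := by rw [hN_def]; push_cast; linarith
    have h2 := (div_lt_iff₀ hε).1 h1
    linarith
  obtain ⟨T, hTsub, hTcard⟩ := hpinf.exists_subset_card_eq N
  have i0 : Fin b := ⟨0, hb⟩
  have hinj : Function.Injective (fun k : ℕ => (fun _ : Fin b => k)) := by
    intro k k' h
    exact congrFun h i0
  set F : Finset (Fin b → ℕ) := T.image (fun k : ℕ => (fun _ : Fin b => k)) with hF_def
  have hFcard : F.card = N := by
    rw [hF_def, Finset.card_image_of_injective T hinj, hTcard]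
  have hFpos : ∀ r₂ ∈ F, 0 < prodP p b r₂ := by
    intro r₂ hr₂
    rw [hF_def, Finset.mem_image] at hr₂
    obtain ⟨k, hk, rfl⟩ := hr₂
    have hpk : 0 < p k := hTsub hk
    rw [prodP, Finset.prod_const, Finset.card_univ, Fintype.card_fin]
    positivity
  have hev : ∀ᶠ t in Filter.atTop, ∀ r₂ ∈ F, V p a t / 2 ≤ V p a (t * prodP p b r₂) := by
    rw [Filter.eventually_all_finset]
    intro r₂ hr₂
    have hq := hFpos r₂ hr₂
    have h1 := (hVa _ hq).eventually (eventually_ge_nhds (by norm_num : (1:ℝ)/2 < 1))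
    filter_upwards [h1, Filter.eventually_gt_atTop 0] with t h1 ht0
    have hV : 0 < V p a t := V_pos hp0 hp1 hpinf a ht0
    have h2 : V p a t / 2 ≤ V p a (prodP p b r₂ * t) := by
      rw [le_div_iff₀ hV] at h1
      linarith
    rwa [mul_comm] at h2
  filter_upwards [hev, Filter.eventually_gt_atTop 0] with t hev ht0
  have hVa_pos : 0 < V p a t := V_pos hp0 hp1 hpinf a ht0
  have hVba_pos : 0 < V p (b+a) t := V_pos hp0 hp1 hpinf (b+a) ht0
  have hsummand : Summable (fun r₂ : Fin b → ℕ => V p a (t * prodP p b r₂)) := by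
    refine Summable.of_nonneg_of_le
      (fun r₂ => V_nonneg hp0 a (mul_nonneg ht0.le (prodP_nonneg hp0 b r₂)))
      (fun r₂ => V_le hp0 hp1 a (mul_nonneg ht0.le (prodP_nonneg hp0 b r₂)))
      (((summable_prodP hp0 hp1 b).1).mul_left t)
  have hlow : (N:ℝ)/2 * V p a t ≤ V p (b+a) t := by
    rw [V_split hp0 hp1 b a ht0.le]
    have hconst : ∑ _x ∈ F, V p a t / 2 = (N:ℝ)/2 * V p a t := by
      rw [Finset.sum_const, hFcard]
      push_cast
      ring
    calc (N:ℝ)/2 * V p a t = ∑ _x ∈ F, V p a t / 2 := hconst.symm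
    _ ≤ ∑ r₂ ∈ F, V p a (t * prodP p b r₂) := Finset.sum_le_sum hev
    _ ≤ ∑' r₂ : Fin b → ℕ, V p a (t * prodP p b r₂) := by
        refine Summable.sum_le_tsum F (fun r₂ _ => ?_) hsummand
        exact V_nonneg hp0 a (mul_nonneg ht0.le (prodP_nonneg hp0 b r₂))
  have hratio : V p a t / V p (b+a) t ≤ 2/(N:ℝ) := by
    have h1 : 0 < (N:ℝ)/2 * V p a t := by positivity
    calc V p a t / V p (b+a) t ≤ V p a t / ((N:ℝ)/2 * V p a t) :=
        div_le_div_of_nonneg_left hVa_pos.le h1 hlow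
    _ = 2/(N:ℝ) := by field_simp
  rw [Real.norm_eq_abs, abs_of_nonneg (div_nonneg hVa_pos.le hVba_pos.le)]
  linarith

end VqOne

section Induction
variable {p : ℕ → ℝ}

lemma tsum_split_nonneg {ι : Type*} (h : ι → ℝ) (hnn : ∀ i, 0 ≤ h i) (hsum : Summable h)
    (S : ι → Prop) [DecidablePred S] :
    ∑' i, h i = (∑' i, if S i then h i else 0) + (∑' i, if S i then 0 else h i) := by
  have hs1 : Summable (fun i => if S i then h i else 0) :=
    Summable.of_nonneg_of_le (fun i => by by_cases hi : S i <;> simp [hi, hnn i])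
      (fun i => by by_cases hi : S i <;> simp [hi, hnn i]) hsum
  have hs2 : Summable (fun i => if S i then 0 else h i) :=
    Summable.of_nonneg_of_le (fun i => by by_cases hi : S i <;> simp [hi, hnn i])
      (fun i => by by_cases hi : S i <;> simp [hi, hnn i]) hsum
  rw [← Summable.tsum_add hs1 hs2]
  refine tsum_congr fun i => ?_
  by_cases hi : S i <;> simp [hi]

lemma summable_V1_family (hp0 : ∀ k, 0 ≤ p k) (hp1 : ∑' k, p k = 1) (k : ℕ) {x : ℝ}
    (hx : 0 ≤ x) : Summable (fun r' : Fin k → ℕ => V p 1 (x * prodP p k r')) :=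
  Summable.of_nonneg_of_le
    (fun r' => V_nonneg hp0 1 (mul_nonneg hx (prodP_nonneg hp0 k r')))
    (fun r' => V_le hp0 hp1 1 (mul_nonneg hx (prodP_nonneg hp0 k r')))
    (((summable_prodP hp0 hp1 k).1).mul_left x)

set_option maxHeartbeats 2000000 in
lemma Vq_succ_le_one (hp0 : ∀ k, 0 ≤ p k) (hp1 : ∑' k, p k = 1)
    (hpinf : {k | 0 < p k}.Infinite)
    (hV1 : ∀ q > 0, Filter.Tendsto (fun t => V p 1 (q*t) / V p 1 t) Filter.atTop (𝓝 1))
    (k : ℕ) (hk : 1 ≤ k)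
    (ih : ∀ q > 0, Filter.Tendsto (fun t => V p k (q*t) / V p k t) Filter.atTop (𝓝 1))
    {q : ℝ} (hq : 0 < q) (hq1 : q ≤ 1) :
    Filter.Tendsto (fun t => V p (k+1) (q*t) / V p (k+1) t) Filter.atTop (𝓝 1) := by
  have key : ∀ ε : ℝ, 0 < ε → ε ≤ 1 →
      ∀ᶠ t in Filter.atTop, |V p (k+1) (q*t) / V p (k+1) t - 1| ≤ 3*ε := by
    intro ε hε hε1
    -- step 1 : gen-1 two-sided bound beyond s₀
    have hball := (hV1 q hq).eventually (Metric.closedBall_mem_nhds (1:ℝ) hε)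
    obtain ⟨s₀', hs₀'⟩ := Filter.eventually_atTop.1 hball
    set s₀ : ℝ := max s₀' 1 with hs₀_def
    have hs₀1 : (1:ℝ) ≤ s₀ := le_max_right _ _
    have hs₀pos : (0:ℝ) < s₀ := lt_of_lt_of_le one_pos hs₀1
    have hbnd : ∀ s, s₀ ≤ s →
        (1-ε) * V p 1 s ≤ V p 1 (q*s) ∧ V p 1 (q*s) ≤ (1+ε) * V p 1 s := by
      intro s hs
      have hs0 : 0 < s := lt_of_lt_of_le hs₀pos hs
      have hV1pos : 0 < V p 1 s := V_pos hp0 hp1 hpinf 1 hs0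
      have h := hs₀' s ((le_max_left _ _).trans hs)
      rw [Real.dist_eq, abs_le] at h
      constructor
      · have h2 : (1 - ε) ≤ V p 1 (q*s) / V p 1 s := by linarith [h.1]
        rw [le_div_iff₀ hV1pos] at h2
        linarith
      · have := h.2
        have h2 : V p 1 (q*s) / V p 1 s ≤ 1 + ε := by linarith
        rw [div_le_iff₀ hV1pos] at h2
        linarith
    -- step 2 : quasi-monotonicity of V_k at ratio 1/s₀
    have hEv1 := (ih (1/s₀) (by positivity)).eventually
      (eventually_le_nhds (by norm_num : (1:ℝ) < 2))
    -- step 3 : V_k is negligible compared to V_{k+1}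
    set δ : ℝ := ε / (4 * s₀ * Real.exp 2) with hδ_def
    have hδpos : 0 < δ := by positivity
    have hzero : Filter.Tendsto (fun t => V p k t / V p (k+1) t) Filter.atTop (𝓝 0) := by
      have h := V_ratio_zero hp0 hp1 hpinf k 1 le_rfl ih
      have harith : 1 + k = k + 1 := Nat.add_comm 1 k
      rwa [harith] at h
    have hEv2 := hzero.eventually (eventually_le_nhds hδpos)
    filter_upwards [hEv1, hEv2, Filter.eventually_gt_atTop 0] with t h1 h2 ht0
    -- notation
    have hVk_pos : 0 < V p k t := V_pos hp0 hp1 hpinf k ht0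
    have hVk1_pos : 0 < V p (k+1) t := V_pos hp0 hp1 hpinf (k+1) ht0
    have hqt0 : 0 < q * t := mul_pos hq ht0
    set P : (Fin k → ℕ) → ℝ := prodP p k with hP_def
    have hPnn : ∀ r', 0 ≤ P r' := fun r' => prodP_nonneg hp0 k r'
    set S : (Fin k → ℕ) → Prop := fun r' => s₀ ≤ t * P r' with hS_def
    classical
    -- the four pieces
    set A1 : ℝ := ∑' r', if S r' then V p 1 ((q*t) * P r') else 0 with hA1_def
    set A2 : ℝ := ∑' r', if S r' then 0 else V p 1 ((q*t) * P r') with hA2_def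
    set B1 : ℝ := ∑' r', if S r' then V p 1 (t * P r') else 0 with hB1_def
    set B2 : ℝ := ∑' r', if S r' then 0 else V p 1 (t * P r') with hB2_def
    have hdecq : V p (k+1) (q*t) = A1 + A2 := by
      rw [V_split hp0 hp1 k 1 hqt0.le]
      exact tsum_split_nonneg _
        (fun r' => V_nonneg hp0 1 (mul_nonneg hqt0.le (hPnn r'))) 
        (summable_V1_family hp0 hp1 k hqt0.le) S
    have hdec : V p (k+1) t = B1 + B2 := by
      rw [V_split hp0 hp1 k 1 ht0.le]
      exact tsum_split_nonneg _
        (fun r' => V_nonneg hp0 1 (mul_nonneg ht0.le (hPnn r'))) 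
        (summable_V1_family hp0 hp1 k ht0.le) S
    -- summabilities for the pieces
    have hsumB1 : Summable (fun r' => if S r' then V p 1 (t * P r') else 0) :=
      Summable.of_nonneg_of_le
        (fun r' => by
          by_cases hr : S r' <;>
            simp [hr, V_nonneg hp0 1 (mul_nonneg ht0.le (hPnn r'))])
        (fun r' => by
          by_cases hr : S r' <;>
            simp [hr, hP_def, V_nonneg hp0 1 (mul_nonneg ht0.le (prodP_nonneg hp0 k r'))])
        (summable_V1_family hp0 hp1 k ht0.le)
    have hsumA1 : Summable (fun r' => if S r' then V p 1 ((q*t) * P r') else 0) :=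
      Summable.of_nonneg_of_le
        (fun r' => by
          by_cases hr : S r' <;>
            simp [hr, V_nonneg hp0 1 (mul_nonneg hqt0.le (hPnn r'))])
        (fun r' => by
          by_cases hr : S r' <;>
            simp [hr, hP_def, V_nonneg hp0 1 (mul_nonneg hqt0.le (prodP_nonneg hp0 k r'))])
        (summable_V1_family hp0 hp1 k hqt0.le)
    -- A1 vs B1 comparison
    have hA1_le : A1 ≤ (1+ε) * B1 := by
      rw [hA1_def, hB1_def, ← tsum_mul_left]
      refine Summable.tsum_le_tsum (fun r' => ?_) hsumA1 (hsumB1.mul_left (1+ε))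
      by_cases hr : S r'
      · simp only [hr, if_true]
        rw [show (q*t) * P r' = q * (t * P r') by ring]
        exact (hbnd (t * P r') hr).2
      · simp [hr]
    have hA1_ge : (1-ε) * B1 ≤ A1 := by
      rw [hA1_def, hB1_def, ← tsum_mul_left]
      refine Summable.tsum_le_tsum (fun r' => ?_) (hsumB1.mul_left (1-ε)) hsumA1
      by_cases hr : S r'
      · simp only [hr, if_true]
        rw [show (q*t) * P r' = q * (t * P r') by ring]
        exact (hbnd (t * P r') hr).1
      · simp [hr]
    -- tail bounds
    have htail : ∀ x : ℝ, 0 < x → x ≤ 1 →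
        (∑' r', if S r' then 0 else V p 1 ((x*t) * P r')) ≤ 2 * (Real.exp 2 * s₀ * V p k t) := by
      intro x hx hx1
      have hxt0 : 0 < x * t := mul_pos hx ht0
      have hterm : ∀ r', (if S r' then 0 else V p 1 ((x*t) * P r'))
          ≤ Real.exp 2 * s₀ * fV ((t/s₀) * P r') := by
        intro r'
        have hfnn : 0 ≤ fV ((t/s₀) * P r') :=
          fV_nonneg (mul_nonneg (by positivity) (hPnn r'))
        by_cases hr : S r'
        · simp only [hr, if_true]
          positivity
        · simp only [hr, if_false]
          have hns : t * P r' < s₀ := by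
            by_contra hc; push_neg at hc; exact hr hc
          have hxP : (t/s₀) * P r' ≤ 1 := by
            rw [div_mul_eq_mul_div, div_le_one hs₀pos]
            nlinarith [hPnn r', ht0]
          have hxP0 : 0 ≤ (t/s₀) * P r' := mul_nonneg (by positivity) (hPnn r')
          have hfg := fV_ge hxP0 hxP
          have hstep : (t/s₀) * P r' ≤ Real.exp 2 * fV ((t/s₀) * P r') := by
            have he : Real.exp (-2) * Real.exp 2 = 1 := by
              rw [← Real.exp_add]; norm_num
            nlinarith [mul_le_mul_of_nonneg_right hfg (Real.exp_pos 2).le]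
          calc V p 1 ((x*t) * P r') ≤ (x*t) * P r' :=
              V_le hp0 hp1 1 (mul_nonneg hxt0.le (hPnn r'))
          _ ≤ t * P r' := by
              nlinarith [mul_nonneg (mul_nonneg (sub_nonneg.2 hx1) ht0.le) (hPnn r')]
          _ = s₀ * ((t/s₀) * P r') := by field_simp
          _ ≤ s₀ * (Real.exp 2 * fV ((t/s₀) * P r')) := by
              exact mul_le_mul_of_nonneg_left hstep hs₀pos.le
          _ = Real.exp 2 * s₀ * fV ((t/s₀) * P r') := by ring
      have hsumL : Summable (fun r' => if S r' then 0 else V p 1 ((x*t) * P r')) :=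
        Summable.of_nonneg_of_le
          (fun r' => by
            by_cases hr : S r' <;>
              simp [hr, V_nonneg hp0 1 (mul_nonneg hxt0.le (hPnn r'))])
          (fun r' => by
            by_cases hr : S r' <;>
              simp [hr, hP_def, V_nonneg hp0 1 (mul_nonneg hxt0.le (prodP_nonneg hp0 k r'))])
          (summable_V1_family hp0 hp1 k hxt0.le)
      have hsumR : Summable (fun r' => Real.exp 2 * s₀ * fV ((t/s₀) * P r')) :=
        (summable_fV hp0 hp1 k (by positivity : (0:ℝ) ≤ t/s₀)).mul_left _
      have h3 := Summable.tsum_le_tsum hterm hsumL hsumR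
      rw [tsum_mul_left] at h3
      have hVts : (∑' r', fV ((t/s₀) * P r')) = V p k (t/s₀) := rfl
      rw [hVts] at h3
      have h4 : V p k (t/s₀) ≤ 2 * V p k t := by
        have h5 : V p k ((1/s₀)*t) / V p k t ≤ 2 := h1
        rw [div_le_iff₀ hVk_pos] at h5
        rw [show t/s₀ = (1/s₀)*t by ring]
        linarith
      calc (∑' r', if S r' then 0 else V p 1 ((x*t) * P r'))
          ≤ Real.exp 2 * s₀ * V p k (t/s₀) := h3
      _ ≤ Real.exp 2 * s₀ * (2 * V p k t) := by
          apply mul_le_mul_of_nonneg_left h4 (by positivity)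
      _ = 2 * (Real.exp 2 * s₀ * V p k t) := by ring
    have hA2_le : A2 ≤ ε/2 * V p (k+1) t := by
      have h3 := htail q hq hq1
      have h4 : V p k t ≤ δ * V p (k+1) t := by
        have := h2
        rw [div_le_iff₀ hVk1_pos] at this
        linarith
      have hconst : 2 * (Real.exp 2 * s₀ * δ) = ε/2 := by
        rw [hδ_def]
        have hs₀ne : s₀ ≠ 0 := ne_of_gt hs₀pos
        have hexpne : Real.exp 2 ≠ 0 := (Real.exp_pos 2).ne'
        field_simp
        ring
      rw [hA2_def]
      calc (∑' r', if S r' then 0 else V p 1 ((q*t) * P r'))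
          ≤ 2 * (Real.exp 2 * s₀ * V p k t) := h3
      _ ≤ 2 * (Real.exp 2 * s₀ * (δ * V p (k+1) t)) := by
          apply mul_le_mul_of_nonneg_left _ (by norm_num)
          apply mul_le_mul_of_nonneg_left h4 (by positivity)
      _ = (2 * (Real.exp 2 * s₀ * δ)) * V p (k+1) t := by ring
      _ = ε/2 * V p (k+1) t := by rw [hconst]
    have hB2_le : B2 ≤ ε/2 * V p (k+1) t := by
      have h3 := htail 1 one_pos le_rfl
      have h4 : V p k t ≤ δ * V p (k+1) t := by
        have := h2
        rw [div_le_iff₀ hVk1_pos] at this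
        linarith
      rw [hB2_def]
      have hone : ∀ r', ((1:ℝ)*t) * P r' = t * P r' := fun r' => by ring
      calc (∑' r', if S r' then 0 else V p 1 (t * P r'))
          = (∑' r', if S r' then 0 else V p 1 (((1:ℝ)*t) * P r')) := by
            refine tsum_congr fun r' => ?_
            rw [hone r']
      _ ≤ 2 * (Real.exp 2 * s₀ * V p k t) := h3
      _ ≤ 2 * (Real.exp 2 * s₀ * (δ * V p (k+1) t)) := by
          apply mul_le_mul_of_nonneg_left _ (by norm_num)
          apply mul_le_mul_of_nonneg_left h4 (by positivity)
      _ = (2 * (Real.exp 2 * s₀ * δ)) * V p (k+1) t := by ring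
      _ = ε/2 * V p (k+1) t := by
          have hconst : 2 * (Real.exp 2 * s₀ * δ) = ε/2 := by
            rw [hδ_def]
            have hs₀ne : s₀ ≠ 0 := ne_of_gt hs₀pos
            have hexpne : Real.exp 2 ≠ 0 := (Real.exp_pos 2).ne'
            field_simp
            ring
          rw [hconst]
    -- positivity of pieces
    have hA2_nn : 0 ≤ A2 := tsum_nonneg fun r' => by
      by_cases hr : S r' <;>
        simp [hr, V_nonneg hp0 1 (mul_nonneg hqt0.le (hPnn r'))]
    have hB2_nn : 0 ≤ B2 := tsum_nonneg fun r' => by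
      by_cases hr : S r' <;>
        simp [hr, V_nonneg hp0 1 (mul_nonneg ht0.le (hPnn r'))]
    have hB1_nn : 0 ≤ B1 := tsum_nonneg fun r' => by
      by_cases hr : S r' <;>
        simp [hr, V_nonneg hp0 1 (mul_nonneg ht0.le (hPnn r'))]
    have hB1_le : B1 ≤ V p (k+1) t := by rw [hdec]; linarith
    -- upper and lower bounds
    have hupper : V p (k+1) (q*t) ≤ (1 + 2*ε) * V p (k+1) t := by
      rw [hdecq]
      have e1 : (1+ε) * B1 ≤ (1+ε) * V p (k+1) t :=
        mul_le_mul_of_nonneg_left hB1_le (by linarith)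
      nlinarith
    have hlower : (1 - 3*ε) * V p (k+1) t ≤ V p (k+1) (q*t) := by
      rw [hdecq, hdec]
      have e1 : (1-ε) * B1 ≤ A1 := hA1_ge
      have e2 : B1 = (B1 + B2) - B2 := by ring
      nlinarith [hB2_le, hε1, hε, hVk1_pos]
    rw [abs_le]
    constructor
    · have hr1 : (1 - 3*ε) ≤ V p (k+1) (q*t) / V p (k+1) t := by
        rw [le_div_iff₀ hVk1_pos]; linarith [hlower]
      linarith
    · have hr2 : V p (k+1) (q*t) / V p (k+1) t ≤ 1 + 2*ε := by
        rw [div_le_iff₀ hVk1_pos]; linarith [hupper]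
      linarith
  rw [Metric.tendsto_atTop]
  intro ε' hε'
  set ε := min (ε'/6) (1/2) with hε_def
  have hεpos : 0 < ε := by
    rw [hε_def]; positivity
  have hε1 : ε ≤ 1 := le_trans (min_le_right _ _) (by norm_num)
  obtain ⟨N, hN⟩ := Filter.eventually_atTop.1 (key ε hεpos hε1)
  refine ⟨N, fun t ht => ?_⟩
  rw [Real.dist_eq]
  have h := hN t ht
  have h2 : 3*ε ≤ ε'/2 := by
    have := min_le_left (ε'/6) (1/2)
    rw [hε_def]
    linarith [this]
  calc |V p (k+1) (q*t) / V p (k+1) t - 1| ≤ 3*ε := h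
  _ ≤ ε'/2 := h2
  _ < ε' := by linarith

end Induction

section Final
variable {p : ℕ → ℝ}

lemma Vq_all (hp0 : ∀ k, 0 ≤ p k) (hp1 : ∑' k, p k = 1) (hpinf : {k | 0 < p k}.Infinite)
    (hGsv : ∀ q > 0, Filter.Tendsto (fun t => G p (q*t) / G p t) Filter.atTop (𝓝 1))
    (hG1 : ∀ᶠ t in Filter.atTop, 1 ≤ G p t) :
    ∀ k, 1 ≤ k → ∀ q, 0 < q →
      Filter.Tendsto (fun t => V p k (q*t) / V p k t) Filter.atTop (𝓝 1) := by
  have hV1' := Vq_one hp0 hp1 hpinf hGsv hG1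
  have hV1 : ∀ q > 0, Filter.Tendsto (fun t => V p 1 (q*t) / V p 1 t) Filter.atTop (𝓝 1) :=
    fun q hq => hV1' q hq
  have main : ∀ k, 1 ≤ k → ∀ q, 0 < q → q ≤ 1 →
      Filter.Tendsto (fun t => V p k (q*t) / V p k t) Filter.atTop (𝓝 1) := by
    intro k
    induction k with
    | zero => intro hk; exact absurd hk (by norm_num)
    | succ n ih =>
      intro _
      rcases Nat.eq_zero_or_pos n with hn | hn
      · subst hn
        intro q hq _
        exact hV1 q hq
      · intro q hq hq1
        have ihn : ∀ q > 0, Filter.Tendsto (fun t => V p n (q*t) / V p n t)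
            Filter.atTop (𝓝 1) := by
          intro q' hq'
          rcases le_or_gt q' 1 with h | h
          · exact ih hn q' hq' h
          · have hinv : (0:ℝ) < 1/q' := by positivity
            have hinv1 : 1/q' ≤ 1 := by rw [div_le_one hq']; linarith
            have h1 := ih hn (1/q') hinv hinv1
            have hmap : Filter.Tendsto (fun t : ℝ => q'*t) Filter.atTop Filter.atTop :=
              Filter.Tendsto.const_mul_atTop hq' Filter.tendsto_id
            have h2 := h1.comp hmap
            have h3 : Filter.Tendsto (fun t => V p n t / V p n (q'*t)) Filter.atTop (𝓝 1) := by
              refine h2.congr fun t => ?_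
              show V p n ((1/q')*(q'*t)) / V p n (q'*t) = _
              rw [show (1/q')*(q'*t) = t by field_simp]
            have h4 := h3.inv₀ one_ne_zero
            rw [inv_one] at h4
            exact h4.congr fun t => by rw [inv_div]
        exact Vq_succ_le_one hp0 hp1 hpinf hV1 n hn ihn hq hq1
  intro k hk q hq
  rcases le_or_gt q 1 with h | h
  · exact main k hk q hq h
  · have hinv : (0:ℝ) < 1/q := by positivity
    have hinv1 : 1/q ≤ 1 := by rw [div_le_one hq]; linarith
    have h1 := main k hk (1/q) hinv hinv1
    have hmap : Filter.Tendsto (fun t : ℝ => q*t) Filter.atTop Filter.atTop :=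
      Filter.Tendsto.const_mul_atTop hq Filter.tendsto_id
    have h2 := h1.comp hmap
    have h3 : Filter.Tendsto (fun t => V p k t / V p k (q*t)) Filter.atTop (𝓝 1) := by
      refine h2.congr fun t => ?_
      show V p k ((1/q)*(q*t)) / V p k (q*t) = _
      rw [show (1/q)*(q*t) = t by field_simp]
    have h4 := h3.inv₀ one_ne_zero
    rw [inv_one] at h4
    exact h4.congr fun t => by rw [inv_div]

lemma exp_diff_le {u v : ℝ} (hu : 0 ≤ u) (huv : u ≤ v) :
    Real.exp (-u) - Real.exp (-v) ≤ v - u := by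
  have h1 : Real.exp (-u) ≤ 1 := Real.exp_le_one_iff.2 (by linarith)
  have h2 := Real.add_one_le_exp (-(v-u))
  have h3 : Real.exp (-v) = Real.exp (-u) * Real.exp (-(v-u)) := by
    rw [← Real.exp_add]; ring_nf
  have h4 : Real.exp (-(v-u)) ≤ 1 := Real.exp_le_one_iff.2 (by linarith)
  nlinarith [Real.exp_pos (-(v-u)), Real.exp_pos (-u)]

lemma crossCov_nonneg (hp0 : ∀ k, 0 ≤ p k) (a m : ℕ) {s t' : ℝ} (hs : 0 ≤ s) (ht' : 0 ≤ t') :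
    0 ≤ crossCov p a m s t' := by
  refine tsum_nonneg fun r₁ => mul_nonneg (Real.exp_pos _).le (tsum_nonneg fun r₂ => ?_)
  have hc : 0 ≤ prodP p a r₁ * prodP p m r₂ :=
    mul_nonneg (prodP_nonneg hp0 a r₁) (prodP_nonneg hp0 m r₂)
  have hM : max (t' - s) 0 ≤ t' := max_le (by linarith) ht'
  have : -t' * (prodP p a r₁ * prodP p m r₂) ≤ -(max (t' - s) 0) * (prodP p a r₁ * prodP p m r₂) := by
    apply mul_le_mul_of_nonneg_right _ hc
    linarith
  have := Real.exp_le_exp.2 this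
  linarith

lemma crossCov_le (hp0 : ∀ k, 0 ≤ p k) (hp1 : ∑' k, p k = 1) (a m : ℕ) {s t' : ℝ}
    (hs : 0 < s) (ht' : 0 ≤ t') :
    crossCov p a m s t' ≤ 2 * V p a (s/2) := by
  set M := max (t' - s) 0 with hM_def
  have hM0 : 0 ≤ M := le_max_right _ _
  have hMt : M ≤ t' := max_le (by linarith) ht'
  have htM : t' - M ≤ s := by
    have := le_max_left (t' - s) 0
    rw [hM_def]; linarith
  have hinner : ∀ r₁ : Fin a → ℕ,
      (∑' r₂ : Fin m → ℕ, (Real.exp (-M * (prodP p a r₁ * prodP p m r₂))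
        - Real.exp (-t' * (prodP p a r₁ * prodP p m r₂)))) ≤ s * prodP p a r₁ := by
    intro r₁
    have hA := prodP_nonneg hp0 a r₁
    have hterm : ∀ r₂ : Fin m → ℕ,
        Real.exp (-M * (prodP p a r₁ * prodP p m r₂))
          - Real.exp (-t' * (prodP p a r₁ * prodP p m r₂))
        ≤ (s * prodP p a r₁) * prodP p m r₂ := by
      intro r₂
      have hc : 0 ≤ prodP p a r₁ * prodP p m r₂ :=
        mul_nonneg hA (prodP_nonneg hp0 m r₂)
      have h1 : Real.exp (-(M * (prodP p a r₁ * prodP p m r₂)))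
          - Real.exp (-(t' * (prodP p a r₁ * prodP p m r₂)))
          ≤ t' * (prodP p a r₁ * prodP p m r₂) - M * (prodP p a r₁ * prodP p m r₂) :=
        exp_diff_le (mul_nonneg hM0 hc) (mul_le_mul_of_nonneg_right hMt hc)
      have h2 : t' * (prodP p a r₁ * prodP p m r₂) - M * (prodP p a r₁ * prodP p m r₂)
          ≤ (s * prodP p a r₁) * prodP p m r₂ := by
        have := mul_le_mul_of_nonneg_right htM hc
        nlinarith
      calc Real.exp (-M * (prodP p a r₁ * prodP p m r₂))
          - Real.exp (-t' * (prodP p a r₁ * prodP p m r₂))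
          = Real.exp (-(M * (prodP p a r₁ * prodP p m r₂)))
            - Real.exp (-(t' * (prodP p a r₁ * prodP p m r₂))) := by rw [neg_mul, neg_mul]
      _ ≤ _ := le_trans h1 h2
    have hsumR : Summable (fun r₂ : Fin m → ℕ => (s * prodP p a r₁) * prodP p m r₂) :=
      ((summable_prodP hp0 hp1 m).1).mul_left _
    have htnn : ∀ r₂ : Fin m → ℕ,
        0 ≤ Real.exp (-M * (prodP p a r₁ * prodP p m r₂))
          - Real.exp (-t' * (prodP p a r₁ * prodP p m r₂)) := by
      intro r₂
      have hc : 0 ≤ prodP p a r₁ * prodP p m r₂ :=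
        mul_nonneg hA (prodP_nonneg hp0 m r₂)
      have : -t' * (prodP p a r₁ * prodP p m r₂) ≤ -M * (prodP p a r₁ * prodP p m r₂) := by
        apply mul_le_mul_of_nonneg_right _ hc
        linarith
      have := Real.exp_le_exp.2 this
      linarith
    have hsumL : Summable (fun r₂ : Fin m → ℕ =>
        Real.exp (-M * (prodP p a r₁ * prodP p m r₂))
          - Real.exp (-t' * (prodP p a r₁ * prodP p m r₂))) :=
      Summable.of_nonneg_of_le htnn hterm hsumR
    have h3 := Summable.tsum_le_tsum hterm hsumL hsumR
    rw [tsum_mul_left, (summable_prodP hp0 hp1 m).2, mul_one] at h3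
    exact h3
  have houter : ∀ r₁ : Fin a → ℕ,
      Real.exp (-s * prodP p a r₁) *
        (∑' r₂ : Fin m → ℕ, (Real.exp (-M * (prodP p a r₁ * prodP p m r₂))
          - Real.exp (-t' * (prodP p a r₁ * prodP p m r₂))))
      ≤ 2 * fV ((s/2) * prodP p a r₁) := by
    intro r₁
    have hA := prodP_nonneg hp0 a r₁
    have h1 : Real.exp (-s * prodP p a r₁) *
        (∑' r₂ : Fin m → ℕ, (Real.exp (-M * (prodP p a r₁ * prodP p m r₂))
          - Real.exp (-t' * (prodP p a r₁ * prodP p m r₂))))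
        ≤ Real.exp (-s * prodP p a r₁) * (s * prodP p a r₁) :=
      mul_le_mul_of_nonneg_left (hinner r₁) (Real.exp_pos _).le
    have h2 := mul_exp_le_fV_half (mul_nonneg hs.le hA)
    calc _ ≤ Real.exp (-s * prodP p a r₁) * (s * prodP p a r₁) := h1
    _ = (s * prodP p a r₁) * Real.exp (-(s * prodP p a r₁)) := by rw [neg_mul]; ring
    _ ≤ 2 * fV ((s * prodP p a r₁)/2) := h2
    _ = 2 * fV ((s/2) * prodP p a r₁) := by rw [show (s * prodP p a r₁)/2 = (s/2) * prodP p a r₁ by ring]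
  have hsumR : Summable (fun r₁ : Fin a → ℕ => 2 * fV ((s/2) * prodP p a r₁)) :=
    (summable_fV hp0 hp1 a (by positivity : (0:ℝ) ≤ s/2)).mul_left 2
  have hnnL : ∀ r₁ : Fin a → ℕ,
      0 ≤ Real.exp (-s * prodP p a r₁) *
        (∑' r₂ : Fin m → ℕ, (Real.exp (-M * (prodP p a r₁ * prodP p m r₂))
          - Real.exp (-t' * (prodP p a r₁ * prodP p m r₂)))) := by
    intro r₁
    refine mul_nonneg (Real.exp_pos _).le (tsum_nonneg fun r₂ => ?_)
    have hc : 0 ≤ prodP p a r₁ * prodP p m r₂ :=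
      mul_nonneg (prodP_nonneg hp0 a r₁) (prodP_nonneg hp0 m r₂)
    have : -t' * (prodP p a r₁ * prodP p m r₂) ≤ -M * (prodP p a r₁ * prodP p m r₂) := by
      apply mul_le_mul_of_nonneg_right _ hc
      linarith
    have := Real.exp_le_exp.2 this
    linarith
  have hsumL : Summable (fun r₁ : Fin a → ℕ =>
      Real.exp (-s * prodP p a r₁) *
        (∑' r₂ : Fin m → ℕ, (Real.exp (-M * (prodP p a r₁ * prodP p m r₂))
          - Real.exp (-t' * (prodP p a r₁ * prodP p m r₂))))) :=
    Summable.of_nonneg_of_le hnnL houter hsumR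
  have h4 := Summable.tsum_le_tsum houter hsumL hsumR
  rw [tsum_mul_left] at h4
  exact h4

end Final

end Stmt7

open Stmt7 in
theorem stmt7
    (p : ℕ → ℝ) (hp0 : ∀ k, 0 ≤ p k) (hp1 : ∑' k, p k = 1)
    (hpinf : {k | 0 < p k}.Infinite)
    (β : ℝ) (hβ : 0 ≤ β)
    (ℓ : ℝ → ℝ) (hℓpos : ∀ x > 0, 0 < ℓ x)
    (hℓsv : ∀ c > 0, Tendsto (fun x => ℓ (c * x) / ℓ x) atTop (𝓝 1))
    (h6 : ∀ lam > 0, Tendsto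
      (fun t => (rhoJ p 1 (lam * t) - rhoJ p 1 t) / (Real.log t ^ β * ℓ (Real.log t)))
      atTop (𝓝 (Real.log lam)))
    (h60 : β = 0 → (∃ x₀, MonotoneOn ℓ (Set.Ici x₀)) ∧ Tendsto ℓ atTop atTop)
    (i j : ℕ) (hi : 1 ≤ i) (hij : i < j) (u v : ℝ) :
    Tendsto
      (fun T => crossCov p i (j - i) (Real.exp (T + u)) (Real.exp (T + v)) /
        Real.sqrt ((PhiJ p i (2 * Real.exp T) - PhiJ p i (Real.exp T)) *
          (PhiJ p j (2 * Real.exp T) - PhiJ p j (Real.exp T))))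
      atTop (𝓝 0) := by
  obtain ⟨hGsv, hG1⟩ := G_props hp0 hp1 hℓpos h6
  have hVi := Vq_all hp0 hp1 hpinf hGsv hG1 i hi
  have hZ : Tendsto (fun t => V p i t / V p j t) atTop (𝓝 0) := by
    have hb : 1 ≤ j - i := by omega
    have hVa : ∀ q > 0, Tendsto (fun t => V p i (q*t) / V p i t) atTop (𝓝 1) :=
      fun q hq => hVi q hq
    have h := V_ratio_zero hp0 hp1 hpinf i (j-i) hb hVa
    rwa [show j - i + i = j by omega] at h
  set c : ℝ := Real.exp u / 2 with hc_def
  have hc : 0 < c := by positivity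
  have hR1 : Tendsto (fun T => V p i (c * Real.exp T) / V p i (Real.exp T)) atTop (𝓝 1) :=
    (hVi c hc).comp Real.tendsto_exp_atTop
  have hR2 : Tendsto (fun T => Real.sqrt (V p i (Real.exp T) / V p j (Real.exp T)))
      atTop (𝓝 0) := by
    have h := (hZ.comp Real.tendsto_exp_atTop).sqrt
    rwa [Real.sqrt_zero] at h
  have hRHS : Tendsto (fun T => 2 * (V p i (c * Real.exp T) / V p i (Real.exp T)) *
      Real.sqrt (V p i (Real.exp T) / V p j (Real.exp T))) atTop (𝓝 0) := by
    have h := (hR1.const_mul 2).mul hR2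
    norm_num at h
    exact h
  refine squeeze_zero' ?_ ?_ hRHS
  · refine Filter.Eventually.of_forall fun T => ?_
    have hτ := Real.exp_pos T
    have hPi : PhiJ p i (2 * Real.exp T) - PhiJ p i (Real.exp T) = V p i (Real.exp T) :=
      Phi_diff hp0 hp1 i hτ.le
    have hPj : PhiJ p j (2 * Real.exp T) - PhiJ p j (Real.exp T) = V p j (Real.exp T) :=
      Phi_diff hp0 hp1 j hτ.le
    rw [hPi, hPj]
    exact div_nonneg (crossCov_nonneg hp0 i (j-i) (Real.exp_pos _).le (Real.exp_pos _).le)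
      (Real.sqrt_nonneg _)
  · refine Filter.Eventually.of_forall fun T => ?_
    have hτ := Real.exp_pos T
    have hPi : PhiJ p i (2 * Real.exp T) - PhiJ p i (Real.exp T) = V p i (Real.exp T) :=
      Phi_diff hp0 hp1 i hτ.le
    have hPj : PhiJ p j (2 * Real.exp T) - PhiJ p j (Real.exp T) = V p j (Real.exp T) :=
      Phi_diff hp0 hp1 j hτ.le
    rw [hPi, hPj]
    have hVipos : 0 < V p i (Real.exp T) := V_pos hp0 hp1 hpinf i hτ
    have hVjpos : 0 < V p j (Real.exp T) := V_pos hp0 hp1 hpinf j hτ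
    have hsi : (0:ℝ) < Real.sqrt (V p i (Real.exp T)) := Real.sqrt_pos.2 hVipos
    have hsj : (0:ℝ) < Real.sqrt (V p j (Real.exp T)) := Real.sqrt_pos.2 hVjpos
    have hD : Real.sqrt (V p i (Real.exp T) * V p j (Real.exp T))
        = Real.sqrt (V p i (Real.exp T)) * Real.sqrt (V p j (Real.exp T)) :=
      Real.sqrt_mul hVipos.le _
    have hDpos : 0 < Real.sqrt (V p i (Real.exp T) * V p j (Real.exp T)) := by
      rw [hD]; positivity
    have hN := crossCov_le hp0 hp1 i (j-i) (Real.exp_pos (T+u)) (Real.exp_pos (T+v)).le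
    have hhalf : Real.exp (T+u)/2 = c * Real.exp T := by
      rw [Real.exp_add, hc_def]; ring
    rw [hhalf] at hN
    have hstep : crossCov p i (j - i) (Real.exp (T + u)) (Real.exp (T + v)) /
        Real.sqrt (V p i (Real.exp T) * V p j (Real.exp T))
        ≤ (2 * V p i (c * Real.exp T)) /
          Real.sqrt (V p i (Real.exp T) * V p j (Real.exp T)) :=
      (div_le_div_iff_of_pos_right hDpos).2 hN
    refine le_trans hstep (le_of_eq ?_)
    rw [hD, Real.sqrt_div' _ hVjpos.le]
    have e1 : Real.sqrt (V p i (Real.exp T)) * Real.sqrt (V p i (Real.exp T))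
        = V p i (Real.exp T) := Real.mul_self_sqrt hVipos.le
    field_simp
    linear_combination (-V p i (c * Real.exp T)) * e1
end

section
/- For all real numbers u ≤ v, ∫_ℝ (exp(−e^{−(x−v)}) − exp(−e^{−(x−u)} − e^{−(x−v)})) dx = log(1 + e^{−(v−u)}). -/
open Real MeasureTheory Set Filter

lemma aux_sq_le_exp {t : ℝ} (ht : 0 ≤ t) : t ^ 2 ≤ Real.exp t := by
  have h := Real.sum_le_exp_of_nonneg ht 5
  norm_num [Finset.sum_range_succ, Nat.factorial] at h
  nlinarith [pow_nonneg ht 4, mul_nonneg ht (sq_nonneg (t - 2)), sq_nonneg t]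

lemma aux_cont (v s : ℝ) :
    Continuous (fun x : ℝ => Real.exp (-(x - v)) * Real.exp (-(s * Real.exp (-(x - v))))) := by
  fun_prop

lemma aux_integrable (v : ℝ) {s : ℝ} (hs : 1 ≤ s) :
    Integrable (fun x : ℝ => Real.exp (-(x - v)) * Real.exp (-(s * Real.exp (-(x - v))))) := by
  rw [← integrableOn_univ, ← Set.Iic_union_Ioi (a := v)]
  apply IntegrableOn.union
  · apply Integrable.mono' ((integrableOn_exp_Iic v).mul_const (Real.exp (-v)))
      (aux_cont v s).aestronglyMeasurable.restrict
    filter_upwards [ae_restrict_mem measurableSet_Iic] with x _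
    set w := Real.exp (-(x - v)) with hw
    have hw0 : 0 < w := Real.exp_pos _
    rw [Real.norm_eq_abs, abs_of_nonneg (by positivity)]
    have hA : Real.exp (-(s * w)) ≤ (Real.exp w)⁻¹ := by
      rw [← Real.exp_neg]
      exact Real.exp_le_exp.2 (by nlinarith)
    have hB : w ^ 2 ≤ Real.exp w := aux_sq_le_exp hw0.le
    have hwinv : Real.exp x * Real.exp (-v) = w⁻¹ := by
      rw [← Real.exp_add, hw, ← Real.exp_neg]
      ring_nf
    rw [hwinv]
    calc w * Real.exp (-(s * w)) ≤ w * (Real.exp w)⁻¹ :=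
          mul_le_mul_of_nonneg_left hA hw0.le
      _ = w / Real.exp w := by rw [div_eq_mul_inv]
      _ ≤ 1 / w := (div_le_div_iff₀ (Real.exp_pos w) hw0).2 (by nlinarith)
      _ = w⁻¹ := one_div w
  · apply Integrable.mono' ((exp_neg_integrableOn_Ioi v one_pos).const_mul (Real.exp v))
      (aux_cont v s).aestronglyMeasurable.restrict
    filter_upwards [ae_restrict_mem measurableSet_Ioi] with x _
    set w := Real.exp (-(x - v)) with hw
    have hw0 : 0 < w := Real.exp_pos _
    rw [Real.norm_eq_abs, abs_of_nonneg (by positivity)]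
    have h1 : Real.exp (-(s * w)) ≤ 1 := by
      rw [show (1:ℝ) = Real.exp 0 by rw [Real.exp_zero]]
      exact Real.exp_le_exp.2 (by nlinarith)
    have h2 : Real.exp v * Real.exp (-1 * x) = w := by
      rw [← Real.exp_add, hw]; ring_nf
    rw [h2]
    nlinarith

lemma aux_integral (v : ℝ) {s : ℝ} (hs : 1 ≤ s) :
    ∫ x : ℝ, Real.exp (-(x - v)) * Real.exp (-(s * Real.exp (-(x - v)))) = s⁻¹ := by
  have hs0 : 0 < s := lt_of_lt_of_le one_pos hs
  have hderiv : ∀ x : ℝ, HasDerivAt (fun x => s⁻¹ * Real.exp (-(s * Real.exp (-(x - v)))))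
      (Real.exp (-(x - v)) * Real.exp (-(s * Real.exp (-(x - v))))) x := by
    intro x
    have h1 : HasDerivAt (fun x : ℝ => -(x - v)) (-1) x := by
      simpa [Pi.neg_def] using ((hasDerivAt_id x).sub_const v).neg
    have h2 : HasDerivAt (fun x : ℝ => Real.exp (-(x - v))) (Real.exp (-(x - v)) * (-1)) x :=
      h1.exp
    have h3 : HasDerivAt (fun x : ℝ => -(s * Real.exp (-(x - v))))
        (s * Real.exp (-(x - v))) x := by
      have := (h2.const_mul s).neg
      refine this.congr_deriv ?_
      ring
    have h4 := (h3.exp).const_mul s⁻¹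
    refine h4.congr_deriv ?_
    field_simp
  have hbot : Tendsto (fun x : ℝ => s⁻¹ * Real.exp (-(s * Real.exp (-(x - v))))) atBot (nhds 0) := by
    have l1 : Tendsto (fun x : ℝ => -(x - v)) atBot atTop := by
      apply tendsto_neg_atBot_atTop.comp
      exact tendsto_atBot_add_const_right _ _ tendsto_id
    have l2 : Tendsto (fun x : ℝ => Real.exp (-(x - v))) atBot atTop :=
      Real.tendsto_exp_atTop.comp l1
    have l3 : Tendsto (fun x : ℝ => -(s * Real.exp (-(x - v)))) atBot atBot := by
      apply tendsto_neg_atTop_atBot.comp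
      exact l2.const_mul_atTop hs0
    have l4 : Tendsto (fun x : ℝ => Real.exp (-(s * Real.exp (-(x - v))))) atBot (nhds 0) :=
      Real.tendsto_exp_atBot.comp l3
    simpa using l4.const_mul s⁻¹
  have htop : Tendsto (fun x : ℝ => s⁻¹ * Real.exp (-(s * Real.exp (-(x - v))))) atTop
      (nhds s⁻¹) := by
    have l1 : Tendsto (fun x : ℝ => -(x - v)) atTop atBot := by
      apply tendsto_neg_atTop_atBot.comp
      exact tendsto_atTop_add_const_right _ _ tendsto_id
    have l2 : Tendsto (fun x : ℝ => Real.exp (-(x - v))) atTop (nhds 0) :=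
      Real.tendsto_exp_atBot.comp l1
    have l3 : Tendsto (fun x : ℝ => -(s * Real.exp (-(x - v)))) atTop (nhds 0) := by
      simpa using (l2.const_mul s).neg
    have l4 : Tendsto (fun x : ℝ => Real.exp (-(s * Real.exp (-(x - v))))) atTop (nhds 1) := by
      simpa [Function.comp_def] using (Real.continuous_exp.tendsto 0).comp l3
    simpa using l4.const_mul s⁻¹
  have := MeasureTheory.integral_of_hasDerivAt_of_tendsto hderiv (aux_integrable v hs) hbot htop
  simpa using this

theorem stmt11 (u v : ℝ) (huv : u ≤ v) :
    (∫ x : ℝ, (Real.exp (-Real.exp (-(x - v))) -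
        Real.exp (-Real.exp (-(x - u)) - Real.exp (-(x - v)))))
      = Real.log (1 + Real.exp (-(v - u))) := by
  set c := Real.exp (-(v - u)) with hc
  have hc0 : 0 < c := Real.exp_pos _
  have h1c : (1:ℝ) ≤ 1 + c := by linarith
  -- rewrite the integrand
  have hintegrand : ∀ x : ℝ,
      Real.exp (-Real.exp (-(x - v))) - Real.exp (-Real.exp (-(x - u)) - Real.exp (-(x - v)))
        = Real.exp (-(1 * Real.exp (-(x - v)))) - Real.exp (-((1 + c) * Real.exp (-(x - v)))) := by
    intro x
    have hxu : Real.exp (-(x - u)) = c * Real.exp (-(x - v)) := by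
      rw [hc, ← Real.exp_add]; ring_nf
    rw [hxu, show -(c * Real.exp (-(x - v))) - Real.exp (-(x - v))
        = -((1 + c) * Real.exp (-(x - v))) by ring,
      show -Real.exp (-(x - v)) = -(1 * Real.exp (-(x - v))) by ring]
  -- the inner interval representation
  have gform : ∀ x : ℝ,
      (∫ s in Ioc (1:ℝ) (1 + c), Real.exp (-(x - v)) * Real.exp (-(s * Real.exp (-(x - v)))))
        = Real.exp (-(1 * Real.exp (-(x - v)))) - Real.exp (-((1 + c) * Real.exp (-(x - v)))) := by
    intro x
    set w := Real.exp (-(x - v)) with hw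
    rw [← intervalIntegral.integral_of_le h1c]
    have hF : ∀ s ∈ Set.uIcc (1:ℝ) (1 + c),
        HasDerivAt (fun s : ℝ => -Real.exp (-(s * w))) (w * Real.exp (-(s * w))) s := by
      intro s _
      have h1 : HasDerivAt (fun s : ℝ => -(s * w)) (-w) s := by
        simpa [Pi.neg_def] using ((hasDerivAt_id s).mul_const w).neg
      have := (h1.exp).neg
      refine this.congr_deriv ?_
      ring
    have hInt : IntervalIntegrable (fun s : ℝ => w * Real.exp (-(s * w))) volume 1 (1 + c) := by
      apply Continuous.intervalIntegrable
      fun_prop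
    rw [intervalIntegral.integral_eq_sub_of_hasDerivAt hF hInt]
    ring
  -- integrability of g
  have hg_int : Integrable (fun x : ℝ =>
      Real.exp (-(1 * Real.exp (-(x - v)))) - Real.exp (-((1 + c) * Real.exp (-(x - v))))) := by
    apply Integrable.mono' ((aux_integrable v le_rfl).const_mul c)
    · apply Continuous.aestronglyMeasurable; fun_prop
    filter_upwards with x
    set w := Real.exp (-(x - v)) with hw
    have hw0 : 0 < w := Real.exp_pos _
    have hmono : Real.exp (-((1 + c) * w)) ≤ Real.exp (-(1 * w)) :=
      Real.exp_le_exp.2 (by nlinarith)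
    rw [Real.norm_eq_abs, abs_of_nonneg (by linarith)]
    have hsplit : Real.exp (-((1 + c) * w)) = Real.exp (-(1 * w)) * Real.exp (-(c * w)) := by
      rw [← Real.exp_add]; ring_nf
    have hlin : 1 - Real.exp (-(c * w)) ≤ c * w := by
      have := Real.add_one_le_exp (-(c * w)); linarith
    rw [hsplit]
    nlinarith [Real.exp_pos (-(1 * w))]
  -- Fubini
  have hcont : Continuous (Function.uncurry fun (x s : ℝ) =>
      Real.exp (-(x - v)) * Real.exp (-(s * Real.exp (-(x - v))))) := by
    apply Continuous.mul <;> fun_prop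
  have hprod : Integrable (Function.uncurry fun (x s : ℝ) =>
      Real.exp (-(x - v)) * Real.exp (-(s * Real.exp (-(x - v)))))
      (volume.prod (volume.restrict (Ioc (1:ℝ) (1 + c)))) := by
    rw [MeasureTheory.integrable_prod_iff hcont.aestronglyMeasurable]
    constructor
    · filter_upwards with x
      exact Continuous.integrableOn_Ioc (by fun_prop)
    · have heq : (fun x : ℝ => ∫ s, ‖Real.exp (-(x - v)) *
          Real.exp (-(s * Real.exp (-(x - v))))‖ ∂(volume.restrict (Ioc (1:ℝ) (1 + c))))
          = fun x : ℝ =>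
            Real.exp (-(1 * Real.exp (-(x - v)))) - Real.exp (-((1 + c) * Real.exp (-(x - v)))) := by
        funext x
        rw [← gform x]
        congr 1
        funext s
        rw [Real.norm_eq_abs, abs_of_nonneg (by positivity)]
      simp only [Function.uncurry_apply_pair]
      rw [heq]
      exact hg_int
  calc (∫ x : ℝ, (Real.exp (-Real.exp (-(x - v))) -
        Real.exp (-Real.exp (-(x - u)) - Real.exp (-(x - v)))))
      = ∫ x : ℝ, ∫ s in Ioc (1:ℝ) (1 + c),
          Real.exp (-(x - v)) * Real.exp (-(s * Real.exp (-(x - v)))) := by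
        congr 1; funext x; rw [hintegrand x, ← gform x]
    _ = ∫ s in Ioc (1:ℝ) (1 + c), ∫ x : ℝ,
          Real.exp (-(x - v)) * Real.exp (-(s * Real.exp (-(x - v)))) :=
        MeasureTheory.integral_integral_swap hprod
    _ = ∫ s in Ioc (1:ℝ) (1 + c), s⁻¹ := by
        apply setIntegral_congr_fun measurableSet_Ioc
        intro s hs
        exact aux_integral v hs.1.le
    _ = Real.log (1 + c) := by
        rw [← intervalIntegral.integral_of_le h1c, integral_inv (by
          rw [Set.uIcc_of_le h1c]
          intro h
          exact absurd h.1 (by norm_num))]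
        rw [div_one]
end

section
/- Let (p_k)_{k∈ℕ} be a probability distribution on ℕ with p_k > 0 for infinitely many k, let j ∈ ℕ, and define ρ_j(x) := #{r ∈ ℕ^j : p_r ≥ 1/x} for x > 0. Then for all λ > 1 and t > 0, ∑_{r∈ℕ^j} (e^{−t p_r} − e^{−λ t p_r}) = ∫_0^t e^{−x} (ρ_j(λt/x) − ρ_j(t/x)) dx + ∫_t^{λt} e^{−x} ρ_j(λt/x) dx. -/
open Filter Topology

section Aux

open MeasureTheory Set

variable {p : ℕ → ℝ}

lemma prodP_nonneg (hp0 : ∀ k, 0 ≤ p k) (j : ℕ) (r : Fin j → ℕ) : 0 ≤ prodP p j r :=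
  Finset.prod_nonneg fun i _ => hp0 _

lemma summable_p (hp0 : ∀ k, 0 ≤ p k) (hp1 : ∑' k, p k = 1) : Summable p := by
  by_contra h
  rw [tsum_eq_zero_of_not_summable h] at hp1
  norm_num at hp1

lemma p_le_one (hp0 : ∀ k, 0 ≤ p k) (hp1 : ∑' k, p k = 1) (k : ℕ) : p k ≤ 1 := by
  have h := Summable.le_tsum (summable_p hp0 hp1) k (fun j _ => hp0 j)
  rw [hp1] at h
  exact h

lemma prodP_le_one (hp0 : ∀ k, 0 ≤ p k) (hp1 : ∑' k, p k = 1) (j : ℕ) (r : Fin j → ℕ) :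
    prodP p j r ≤ 1 :=
  Finset.prod_le_one (fun i _ => hp0 _) (fun i _ => p_le_one hp0 hp1 _)

lemma summable_prodP (hp0 : ∀ k, 0 ≤ p k) (hp1 : ∑' k, p k = 1) (j : ℕ) :
    Summable (prodP p j) := by
  induction j with
  | zero => exact Summable.of_finite
  | succ n ih =>
    have h2 : Summable (fun x : ℕ × (Fin n → ℕ) => p x.1 * prodP p n x.2) :=
      (summable_p hp0 hp1).mul_of_nonneg ih (fun k => hp0 k) (fun r => prodP_nonneg hp0 n r)
    rw [← (Fin.consEquiv (fun _ : Fin (n + 1) => ℕ)).summable_iff]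
    have heq : (prodP p (n + 1) ∘ (Fin.consEquiv (fun _ : Fin (n + 1) => ℕ)))
        = fun x : ℕ × (Fin n → ℕ) => p x.1 * prodP p n x.2 := by
      funext x
      simp only [Function.comp_apply, Fin.consEquiv, Equiv.coe_fn_mk, prodP,
        Fin.prod_univ_succ, Fin.cons_zero, Fin.cons_succ]
    rw [heq]
    exact h2

lemma finite_setOf_le (hp0 : ∀ k, 0 ≤ p k) (hp1 : ∑' k, p k = 1) (j : ℕ) {ε : ℝ}
    (hε : 0 < ε) : {r : Fin j → ℕ | ε ≤ prodP p j r}.Finite := by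
  have h := (summable_prodP hp0 hp1 j).tendsto_cofinite_zero.eventually_lt_const hε
  rw [Filter.eventually_cofinite] at h
  apply h.subset
  intro r hr
  simp only [mem_setOf_eq, not_lt] at hr ⊢
  exact hr

lemma rhoJ_eq_ncard (j : ℕ) (y : ℝ) :
    rhoJ p j y = (({r : Fin j → ℕ | 1 / y ≤ prodP p j r}).ncard : ℝ) := by
  rw [rhoJ]
  norm_cast

lemma rhoJ_eq_zero (hp0 : ∀ k, 0 ≤ p k) (hp1 : ∑' k, p k = 1) (j : ℕ) {t x : ℝ}
    (ht : 0 < t) (hx : t < x) : rhoJ p j (t / x) = 0 := by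
  have hx0 : 0 < x := ht.trans hx
  have hempty : {r : Fin j → ℕ | 1 / (t / x) ≤ prodP p j r} = ∅ := by
    ext r
    simp only [mem_setOf_eq, mem_empty_iff_false, iff_false, not_le]
    have h1 : prodP p j r ≤ 1 := prodP_le_one hp0 hp1 j r
    have h2 : (1 : ℝ) < 1 / (t / x) := by
      rw [one_div_div]
      rw [lt_div_iff₀ ht]
      linarith
    linarith
  rw [rhoJ_eq_ncard, hempty]
  simp

/-- The family of indicator functions whose integrals give the individual terms. -/
noncomputable def gA (p : ℕ → ℝ) (j : ℕ) (lam t : ℝ) (r : Fin j → ℕ) : ℝ → ℝ :=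
  (Set.Ioc (t * prodP p j r) (lam * t * prodP p j r)).indicator fun y => Real.exp (-y)

lemma gA_nonneg (j : ℕ) (lam t : ℝ) (r : Fin j → ℕ) (x : ℝ) : 0 ≤ gA p j lam t r x :=
  Set.indicator_nonneg (fun y _ => (Real.exp_pos _).le) x

lemma gA_integrable (j : ℕ) (lam t : ℝ) (r : Fin j → ℕ) : Integrable (gA p j lam t r) := by
  refine IntegrableOn.integrable_indicator ?_ measurableSet_Ioc
  exact (Real.continuous_exp.comp continuous_neg).integrableOn_Ioc

lemma gA_integral (hp0 : ∀ k, 0 ≤ p k) (j : ℕ) {lam t : ℝ} (hlam : 1 < lam) (ht : 0 < t)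
    (r : Fin j → ℕ) :
    ∫ x, gA p j lam t r x
      = Real.exp (-(t * prodP p j r)) - Real.exp (-(lam * t * prodP p j r)) := by
  have hq0 : 0 ≤ prodP p j r := prodP_nonneg hp0 j r
  have hab : t * prodP p j r ≤ lam * t * prodP p j r := by
    nlinarith [mul_nonneg (mul_nonneg (sub_nonneg.2 hlam.le) ht.le) hq0]
  rw [gA, integral_indicator measurableSet_Ioc,
    ← intervalIntegral.integral_of_le hab,
    intervalIntegral.integral_comp_neg (fun x => Real.exp x), integral_exp]

lemma exp_sub_exp_le {a b : ℝ} (ha : 0 ≤ a) (hab : a ≤ b) :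
    Real.exp (-a) - Real.exp (-b) ≤ b - a := by
  have h1 : Real.exp (-a) ≤ 1 := by
    rw [show (1 : ℝ) = Real.exp 0 by simp]
    exact Real.exp_le_exp.2 (by linarith)
  have h2 : (a - b) + 1 ≤ Real.exp (a - b) := Real.add_one_le_exp _
  have h3 : Real.exp (-a) * Real.exp (a - b) = Real.exp (-b) := by
    rw [← Real.exp_add]; ring_nf
  nlinarith [Real.exp_pos (-a), Real.exp_pos (-b)]

lemma gA_integral_le (hp0 : ∀ k, 0 ≤ p k) (j : ℕ) {lam t : ℝ} (hlam : 1 < lam) (ht : 0 < t)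
    (r : Fin j → ℕ) :
    ∫ x, gA p j lam t r x ≤ (lam - 1) * t * prodP p j r := by
  rw [gA_integral hp0 j hlam ht r]
  have hq0 : 0 ≤ prodP p j r := prodP_nonneg hp0 j r
  have h := exp_sub_exp_le (mul_nonneg ht.le hq0)
    (show t * prodP p j r ≤ lam * t * prodP p j r by
      nlinarith [mul_nonneg (mul_nonneg (sub_nonneg.2 hlam.le) ht.le) hq0])
  nlinarith

/-- Key pointwise identity: the tsum of indicators equals the counting formula. -/
lemma tsum_gA_eq (hp0 : ∀ k, 0 ≤ p k) (hp1 : ∑' k, p k = 1) (j : ℕ)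
    {lam t x : ℝ} (hlam : 1 < lam) (ht : 0 < t) (hx : 0 < x) :
    ∑' r : Fin j → ℕ, gA p j lam t r x
      = Real.exp (-x) * (rhoJ p j (lam * t / x) - rhoJ p j (t / x)) := by
  have hlt : 0 < lam * t := mul_pos (one_pos.trans hlam) ht
  set A : Set (Fin j → ℕ) := {r | 1 / (lam * t / x) ≤ prodP p j r} with hA
  set B : Set (Fin j → ℕ) := {r | 1 / (t / x) ≤ prodP p j r} with hB
  have hmemA : ∀ r, r ∈ A ↔ x ≤ lam * t * prodP p j r := by
    intro r
    rw [hA, Set.mem_setOf_eq, one_div_div, div_le_iff₀ hlt, mul_comm]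
  have hmemB : ∀ r, r ∈ B ↔ x ≤ t * prodP p j r := by
    intro r
    rw [hB, Set.mem_setOf_eq, one_div_div, div_le_iff₀ ht, mul_comm]
  have hBA : B ⊆ A := by
    intro r hr
    have h1 := (hmemB r).1 hr
    refine (hmemA r).2 ?_
    nlinarith [prodP_nonneg hp0 j r]
  have hAfin : A.Finite := by
    have hA' : A = {r | x / (lam * t) ≤ prodP p j r} := by
      ext r; rw [hA]; simp [one_div_div]
    rw [hA']
    exact finite_setOf_le hp0 hp1 j (div_pos hx hlt)
  have hSfin : (A \ B).Finite := hAfin.diff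
  have hmem : ∀ r, x ∈ Set.Ioc (t * prodP p j r) (lam * t * prodP p j r) ↔ r ∈ A \ B := by
    intro r
    constructor
    · rintro ⟨h1, h2⟩
      exact ⟨(hmemA r).2 h2, fun hb => absurd ((hmemB r).1 hb) (not_le.2 h1)⟩
    · rintro ⟨ha, hb⟩
      exact ⟨not_le.1 (fun h => hb ((hmemB r).2 h)), (hmemA r).1 ha⟩
  simp only [gA]
  rw [tsum_eq_sum (s := hSfin.toFinset)
      (fun r hr => Set.indicator_of_notMem
        (fun hm => hr (hSfin.mem_toFinset.2 ((hmem r).1 hm))) _)]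
  rw [Finset.sum_congr rfl
      (fun r hr => Set.indicator_of_mem ((hmem r).2 (hSfin.mem_toFinset.1 hr)) _)]
  rw [Finset.sum_const, nsmul_eq_mul]
  have hrA : rhoJ p j (lam * t / x) = (A.ncard : ℝ) := rhoJ_eq_ncard j _
  have hrB : rhoJ p j (t / x) = (B.ncard : ℝ) := rhoJ_eq_ncard j _
  have hcard2 : hSfin.toFinset.card = (A \ B).ncard :=
    (Set.ncard_eq_toFinset_card _ hSfin).symm
  have hcard : ((A \ B).ncard : ℝ) = (A.ncard : ℝ) - (B.ncard : ℝ) := by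
    rw [Set.ncard_diff hBA (hAfin.subset hBA), Nat.cast_sub (Set.ncard_le_ncard hBA hAfin)]
  rw [hrA, hrB, hcard2, hcard]
  ring

end Aux

theorem stmt12
    (p : ℕ → ℝ) (hp0 : ∀ k, 0 ≤ p k) (hp1 : ∑' k, p k = 1)
    (hpinf : {k | 0 < p k}.Infinite)
    (j : ℕ) (hj : 1 ≤ j) (lam t : ℝ) (hlam : 1 < lam) (ht : 0 < t) :
    (∑' r : Fin j → ℕ,
        (Real.exp (-t * prodP p j r) - Real.exp (-(lam * t) * prodP p j r)))
      = (∫ x in (0 : ℝ)..t, Real.exp (-x) * (rhoJ p j (lam * t / x) - rhoJ p j (t / x)))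
        + ∫ x in t..(lam * t), Real.exp (-x) * rhoJ p j (lam * t / x) := by
  classical
  open MeasureTheory Set in
  have hq0 : ∀ r, 0 ≤ prodP p j r := prodP_nonneg hp0 j
  have hq1 : ∀ r, prodP p j r ≤ 1 := prodP_le_one hp0 hp1 j
  have hlt : 0 < lam * t := mul_pos (one_pos.trans hlam) ht
  have htlt : t < lam * t := by nlinarith
  -- pointwise splitting of each gA into the two windows
  have hsplit : ∀ r x, gA p j lam t r x
      = (Set.Ioc (0 : ℝ) t).indicator (gA p j lam t r) x
        + (Set.Ioc t (lam * t)).indicator (gA p j lam t r) x := by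
    intro r x
    by_cases h1 : x ∈ Set.Ioc (0 : ℝ) t
    · have h2 : x ∉ Set.Ioc t (lam * t) := fun h => absurd h.1 (not_lt.2 h1.2)
      rw [Set.indicator_of_mem h1, Set.indicator_of_notMem h2, add_zero]
    · by_cases h2 : x ∈ Set.Ioc t (lam * t)
      · rw [Set.indicator_of_notMem h1, Set.indicator_of_mem h2, zero_add]
      · rw [Set.indicator_of_notMem h1, Set.indicator_of_notMem h2, add_zero]
        refine Set.indicator_of_notMem ?_ _
        rintro ⟨hx1, hx2⟩
        have hx0 : 0 < x := lt_of_le_of_lt (mul_nonneg ht.le (hq0 r)) hx1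
        have hxle : x ≤ lam * t := le_trans hx2 (by nlinarith [hq1 r, hq0 r])
        rcases le_or_gt x t with h | h
        · exact h1 ⟨hx0, h⟩
        · exact h2 ⟨h, hxle⟩
  -- per-r splitting of the integral
  have hsplitInt : ∀ r, ∫ x, gA p j lam t r x
      = (∫ x in Set.Ioc (0 : ℝ) t, gA p j lam t r x)
        + ∫ x in Set.Ioc t (lam * t), gA p j lam t r x := by
    intro r
    have hi1 : Integrable ((Set.Ioc (0 : ℝ) t).indicator (gA p j lam t r)) :=
      ((gA_integrable j lam t r).integrableOn).integrable_indicator measurableSet_Ioc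
    have hi2 : Integrable ((Set.Ioc t (lam * t)).indicator (gA p j lam t r)) :=
      ((gA_integrable j lam t r).integrableOn).integrable_indicator measurableSet_Ioc
    calc ∫ x, gA p j lam t r x
        = ∫ x, ((Set.Ioc (0 : ℝ) t).indicator (gA p j lam t r) x
            + (Set.Ioc t (lam * t)).indicator (gA p j lam t r) x) := by
          exact integral_congr_ae (Filter.Eventually.of_forall (hsplit r))
      _ = (∫ x, (Set.Ioc (0 : ℝ) t).indicator (gA p j lam t r) x)
            + ∫ x, (Set.Ioc t (lam * t)).indicator (gA p j lam t r) x :=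
          integral_add hi1 hi2
      _ = (∫ x in Set.Ioc (0 : ℝ) t, gA p j lam t r x)
            + ∫ x in Set.Ioc t (lam * t), gA p j lam t r x := by
          rw [integral_indicator measurableSet_Ioc, integral_indicator measurableSet_Ioc]
  -- summability of the piecewise integrals
  have hsum0 : Summable (fun r : Fin j → ℕ => (lam - 1) * t * prodP p j r) := by
    have := (summable_prodP hp0 hp1 j).mul_left ((lam - 1) * t)
    simpa [mul_assoc] using this
  have hpiece : ∀ S : Set ℝ, MeasurableSet S →
      Summable (fun r : Fin j → ℕ => ∫ x in S, gA p j lam t r x) := by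
    intro S hS
    refine Summable.of_nonneg_of_le
      (fun r => setIntegral_nonneg hS (fun x _ => gA_nonneg j lam t r x))
      (fun r => le_trans
        (setIntegral_le_integral (gA_integrable j lam t r)
          (Filter.Eventually.of_forall (gA_nonneg j lam t r)))
        (gA_integral_le hp0 j hlam ht r)) hsum0
  -- interchange of tsum and set integral
  have hts : ∀ S : Set ℝ, MeasurableSet S →
      ∑' r : Fin j → ℕ, ∫ x in S, gA p j lam t r x
        = ∫ x in S, ∑' r : Fin j → ℕ, gA p j lam t r x := by
    intro S hS
    refine integral_tsum_of_summable_integral_norm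
      (fun r => (gA_integrable j lam t r).integrableOn) ?_
    have heq : (fun r : Fin j → ℕ => ∫ x in S, ‖gA p j lam t r x‖)
        = fun r : Fin j → ℕ => ∫ x in S, gA p j lam t r x := by
      funext r
      exact integral_congr_ae
        (Filter.Eventually.of_forall (fun x => Real.norm_of_nonneg (gA_nonneg j lam t r x)))
    rw [heq]
    exact hpiece S hS
  -- pointwise values of the tsum on each window
  have hval1 : ∀ x ∈ Set.Ioc (0 : ℝ) t,
      (∑' r : Fin j → ℕ, gA p j lam t r x)
        = Real.exp (-x) * (rhoJ p j (lam * t / x) - rhoJ p j (t / x)) :=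
    fun x hx => tsum_gA_eq hp0 hp1 j hlam ht hx.1
  have hval2 : ∀ x ∈ Set.Ioc t (lam * t),
      (∑' r : Fin j → ℕ, gA p j lam t r x)
        = Real.exp (-x) * rhoJ p j (lam * t / x) := by
    intro x hx
    rw [tsum_gA_eq hp0 hp1 j hlam ht (ht.trans hx.1), rhoJ_eq_zero hp0 hp1 j ht hx.1]
    ring
  calc (∑' r : Fin j → ℕ,
        (Real.exp (-t * prodP p j r) - Real.exp (-(lam * t) * prodP p j r)))
      = ∑' r : Fin j → ℕ, ∫ x, gA p j lam t r x := by
        refine tsum_congr (fun r => ?_)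
        rw [gA_integral hp0 j hlam ht r, neg_mul, neg_mul]
    _ = ∑' r : Fin j → ℕ, ((∫ x in Set.Ioc (0 : ℝ) t, gA p j lam t r x)
          + ∫ x in Set.Ioc t (lam * t), gA p j lam t r x) := tsum_congr hsplitInt
    _ = (∑' r : Fin j → ℕ, ∫ x in Set.Ioc (0 : ℝ) t, gA p j lam t r x)
          + ∑' r : Fin j → ℕ, ∫ x in Set.Ioc t (lam * t), gA p j lam t r x :=
        Summable.tsum_add (hpiece _ measurableSet_Ioc) (hpiece _ measurableSet_Ioc)
    _ = (∫ x in Set.Ioc (0 : ℝ) t, ∑' r : Fin j → ℕ, gA p j lam t r x)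
          + ∫ x in Set.Ioc t (lam * t), ∑' r : Fin j → ℕ, gA p j lam t r x := by
        rw [hts _ measurableSet_Ioc, hts _ measurableSet_Ioc]
    _ = (∫ x in Set.Ioc (0 : ℝ) t,
            Real.exp (-x) * (rhoJ p j (lam * t / x) - rhoJ p j (t / x)))
          + ∫ x in Set.Ioc t (lam * t), Real.exp (-x) * rhoJ p j (lam * t / x) := by
        rw [setIntegral_congr_fun measurableSet_Ioc hval1,
          setIntegral_congr_fun measurableSet_Ioc hval2]
    _ = (∫ x in (0 : ℝ)..t, Real.exp (-x) * (rhoJ p j (lam * t / x) - rhoJ p j (t / x)))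
          + ∫ x in t..(lam * t), Real.exp (-x) * rhoJ p j (lam * t / x) := by
        rw [intervalIntegral.integral_of_le ht.le, intervalIntegral.integral_of_le htlt.le]
end

section
/- For every x ∈ ℝ, (1/(2π)) ∫_ℝ e^{−i t x} log(1 + e^{−|t|}) dt = (1/π) ∑_{n=1}^∞ (−1)^{n−1}/(x² + n²). -/
open MeasureTheory Set

-- step 1: complex exponential integral on Ioi 0
lemma my_integrableOn_cexp (c : ℂ) (hc : 0 < c.re) :
    IntegrableOn (fun t : ℝ => Complex.exp (-(c * t))) (Ioi 0) := by
  apply Integrable.mono' (exp_neg_integrableOn_Ioi 0 hc)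
  · apply Continuous.aestronglyMeasurable
    fun_prop
  · filter_upwards with t
    simp [Complex.norm_exp, Complex.mul_re, neg_mul]

lemma my_integral_cexp (c : ℂ) (hc : 0 < c.re) :
    ∫ t : ℝ in Ioi 0, Complex.exp (-(c * t)) = 1 / c := by
  have hc0 : c ≠ 0 := fun h => by simp [h] at hc
  have hd : ∀ t : ℝ, t ∈ Ici (0:ℝ) →
      HasDerivAt (fun t : ℝ => -Complex.exp (-(c * t)) / c) (Complex.exp (-(c * t))) t := by
    intro t _
    have h1 : HasDerivAt (fun t : ℝ => -(c * (t:ℂ))) (-c) t := by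
      simpa using (((hasDerivAt_id (t:ℂ)).const_mul c).neg).comp_ofReal
    have h2 := (h1.cexp.div_const c).neg
    have hf : (fun t : ℝ => -Complex.exp (-(c * t)) / c) = fun s : ℝ => -(Complex.exp (-(c * s)) / c) := by
      funext s; ring
    rw [hf]
    convert h2 using 1
    · rfl
    · rfl
    field_simp
  have htend : Filter.Tendsto (fun t : ℝ => -Complex.exp (-(c * t)) / c)
      Filter.atTop (nhds 0) := by
    rw [tendsto_zero_iff_norm_tendsto_zero]
    have : (fun t : ℝ => ‖-Complex.exp (-(c * t)) / c‖)
        = fun t : ℝ => Real.exp (-(c.re * t)) / ‖c‖ := by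
      funext t
      simp [Complex.norm_exp, Complex.mul_re, neg_mul]
    rw [this]
    have : Filter.Tendsto (fun t : ℝ => Real.exp (-(c.re * t))) Filter.atTop (nhds 0) := by
      apply Real.tendsto_exp_atBot.comp
      exact Filter.tendsto_neg_atBot_iff.mpr (Filter.Tendsto.const_mul_atTop hc Filter.tendsto_id)
    simpa using this.div_const ‖c‖
  have := integral_Ioi_of_hasDerivAt_of_tendsto' hd (my_integrableOn_cexp c hc) htend
  simp at this
  rw [this]
  ring

lemma my_integrable_exp_abs {a : ℝ} (ha : 0 < a) :
    Integrable (fun t : ℝ => Real.exp (-(a * |t|))) := by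
  have hIoi : IntegrableOn (fun t : ℝ => Real.exp (-(a * |t|))) (Ioi 0) := by
    apply (exp_neg_integrableOn_Ioi 0 ha).congr_fun _ measurableSet_Ioi
    intro t ht
    show Real.exp (-a * t) = Real.exp (-(a * |t|))
    rw [abs_of_pos ht, neg_mul]
  have hIic : IntegrableOn (fun t : ℝ => Real.exp (-(a * |t|))) (Iic 0) := by
    rw [IntegrableOn, ← Measure.map_neg_eq_self (volume : Measure ℝ)]
    have m : MeasurableEmbedding fun x : ℝ => -x := (Homeomorph.neg ℝ).measurableEmbedding
    rw [Measure.restrict_map m.measurable measurableSet_Iic, m.integrable_map_iff]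
    simp_rw [Function.comp_def, abs_neg, neg_preimage, neg_Iic, neg_zero]
    exact (integrableOn_Ici_iff_integrableOn_Ioi).mpr hIoi
  have h := integrableOn_union.mpr ⟨hIic, hIoi⟩
  rwa [Iic_union_Ioi, integrableOn_univ] at h

lemma my_integrable_kernel (x : ℝ) {a : ℝ} (ha : 0 < a) :
    Integrable (fun t : ℝ => Complex.exp (-Complex.I * t * x)
      * Complex.exp (-((a * |t| : ℝ) : ℂ))) := by
  apply (my_integrable_exp_abs ha).mono'
  · apply Continuous.aestronglyMeasurable
    fun_prop
  · filter_upwards with t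
    simp [Complex.norm_exp, Complex.mul_re, Complex.mul_im]

lemma my_integral_kernel (x : ℝ) {a : ℝ} (ha : 0 < a) :
    ∫ t : ℝ, Complex.exp (-Complex.I * t * x) * Complex.exp (-((a * |t| : ℝ) : ℂ))
      = 2 * a / (a ^ 2 + x ^ 2) := by
  have hre1 : (0:ℝ) < ((a : ℂ) + Complex.I * x).re := by simp [ha]
  have hre2 : (0:ℝ) < ((a : ℂ) - Complex.I * x).re := by simp [ha]
  have hc1 : (a : ℂ) + Complex.I * x ≠ 0 := fun h => by rw [h] at hre1; simp at hre1
  have hc2 : (a : ℂ) - Complex.I * x ≠ 0 := fun h => by rw [h] at hre2; simp at hre2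
  have hInt := my_integrable_kernel x ha
  have h1 : ∫ t : ℝ in Ioi 0, Complex.exp (-Complex.I * t * x) * Complex.exp (-((a * |t| : ℝ) : ℂ))
      = 1 / ((a : ℂ) + Complex.I * x) := by
    rw [← my_integral_cexp _ hre1]
    apply setIntegral_congr_fun measurableSet_Ioi
    intro t ht
    show Complex.exp (-Complex.I * t * x) * Complex.exp (-((a * |t| : ℝ) : ℂ))
      = Complex.exp (-(((a : ℂ) + Complex.I * x) * t))
    rw [abs_of_pos ht, ← Complex.exp_add]
    congr 1
    push_cast
    ring
  have h2 : ∫ t : ℝ in Iic 0, Complex.exp (-Complex.I * t * x) * Complex.exp (-((a * |t| : ℝ) : ℂ))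
      = 1 / ((a : ℂ) - Complex.I * x) := by
    rw [show (0:ℝ) = -0 by norm_num, ← integral_comp_neg_Ioi, ← my_integral_cexp _ hre2]
    apply setIntegral_congr_fun measurableSet_Ioi
    intro t ht
    show Complex.exp (-Complex.I * (-t : ℝ) * x) * Complex.exp (-((a * |(-t : ℝ)| : ℝ) : ℂ))
      = Complex.exp (-(((a : ℂ) - Complex.I * x) * t))
    rw [abs_neg, abs_of_pos ht, ← Complex.exp_add]
    congr 1
    push_cast
    ring
  have hsplit := setIntegral_union (Iic_disjoint_Ioi (le_refl (0:ℝ))) measurableSet_Ioi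
    hInt.integrableOn hInt.integrableOn (μ := volume)
  rw [Iic_union_Ioi] at hsplit
  rw [← setIntegral_univ, hsplit, h1, h2]
  have hprod : ((a : ℂ) - Complex.I * x) * ((a : ℂ) + Complex.I * x) = (a:ℂ)^2 + (x:ℂ)^2 := by
    have := Complex.I_sq
    ring_nf
    rw [Complex.I_sq]
    ring
  rw [div_add_div _ _ hc2 hc1, hprod]
  push_cast
  ring

lemma my_integral_exp_abs {a : ℝ} (ha : 0 < a) :
    ∫ t : ℝ, Real.exp (-(a * |t|)) = 2 / a := by
  have h := my_integral_kernel 0 ha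
  simp only [Complex.ofReal_zero, mul_zero, Complex.exp_zero, one_mul] at h
  rw [show (fun t : ℝ => Complex.exp (-((a * |t| : ℝ) : ℂ)))
      = fun t : ℝ => ((Real.exp (-(a * |t|)) : ℝ) : ℂ) by
    funext t; rw [Complex.ofReal_exp, Complex.ofReal_neg]] at h
  have h3 := integral_ofReal (𝕜 := ℂ) (f := fun t : ℝ => Real.exp (-(a * |t|))) (μ := volume)
  have h5 := h.symm.trans h3
  norm_num at h5
  have h6 : (2 * a / a ^ 2 : ℝ) = ∫ t : ℝ, Real.exp (-(a * |t|)) := by exact_mod_cast h5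
  rw [← h6, sq]
  field_simp

lemma my_hasSum_log (t : ℝ) (ht : t ≠ 0) :
    HasSum (fun n : ℕ => (-1 : ℝ) ^ n / (n + 1) * Real.exp (-((n + 1) * |t|)))
      (Real.log (1 + Real.exp (-|t|))) := by
  have habs : |(-Real.exp (-|t|))| < 1 := by
    rw [abs_neg, abs_of_pos (Real.exp_pos _)]
    apply Real.exp_lt_one_iff.mpr
    simpa using abs_pos.mpr ht
  have h := (Real.hasSum_pow_div_log_of_abs_lt_one habs).neg
  rw [neg_neg, sub_neg_eq_add] at h
  convert h using 2 with n
  · rfl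
  rw [show -(((n:ℝ) + 1) * |t|) = ((n + 1 : ℕ) : ℝ) * (-|t|) by push_cast; ring,
    Real.exp_nat_mul,
    show (-Real.exp (-|t|)) ^ (n + 1) = -((-1 : ℝ) ^ n * Real.exp (-|t|) ^ (n + 1)) by
      rw [neg_pow, pow_succ]; ring]
  ring

theorem stmt14 (x : ℝ) :
    (1 / (2 * Real.pi) : ℂ) *
        ∫ t : ℝ, Complex.exp (-Complex.I * t * x) * (Real.log (1 + Real.exp (-|t|)) : ℂ)
      = ((1 / Real.pi) * ∑' n : ℕ, (-1 : ℝ) ^ n / (x ^ 2 + (n + 1) ^ 2) : ℝ) := by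
  set F : ℕ → ℝ → ℂ := fun n t =>
    (((-1 : ℝ) ^ n / (n + 1) : ℝ) : ℂ) *
      (Complex.exp (-Complex.I * t * x) * Complex.exp (-(((((n:ℝ) + 1) * |t| : ℝ)) : ℂ)))
    with hF
  have hpos : ∀ n : ℕ, (0:ℝ) < (n:ℝ) + 1 := fun n => by positivity
  have hint : ∀ n, Integrable (F n) := fun n =>
    (my_integrable_kernel x (hpos n)).const_mul _
  have hnorm : ∀ (n : ℕ) (t : ℝ),
      ‖F n t‖ = (1 / ((n:ℝ) + 1)) * Real.exp (-(((n:ℝ) + 1) * |t|)) := by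
    intro n t
    rw [hF]
    simp only [norm_mul, Complex.norm_real]
    rw [Complex.norm_exp, Complex.norm_exp]
    have h1 : (-Complex.I * (t:ℂ) * (x:ℂ)).re = 0 := by
      simp [Complex.mul_re, Complex.mul_im]
    have h2 : (-((((n:ℝ) + 1) * |t| : ℝ) : ℂ)).re = -(((n:ℝ) + 1) * |t|) := by simp
    rw [h1, h2, Real.exp_zero]
    rw [Real.norm_eq_abs, abs_div, abs_pow, abs_neg, abs_one, one_pow,
      abs_of_pos (hpos n)]
    ring
  have hnint : ∀ n : ℕ, ∫ t : ℝ, ‖F n t‖ = (1 / ((n:ℝ) + 1)) * (2 / ((n:ℝ) + 1)) := by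
    intro n
    simp_rw [hnorm n]
    rw [integral_const_mul, my_integral_exp_abs (hpos n)]
  have hsum : Summable (fun n : ℕ => ∫ t : ℝ, ‖F n t‖) := by
    rw [show (fun n : ℕ => ∫ t : ℝ, ‖F n t‖)
        = fun n : ℕ => (1 / ((n:ℝ) + 1)) * (2 / ((n:ℝ) + 1)) from funext hnint]
    have h0 : Summable (fun n : ℕ => 1 / ((n:ℝ) ^ 2)) :=
      Real.summable_one_div_nat_pow.mpr one_lt_two
    have h1 := ((summable_nat_add_iff 1).mpr h0).mul_left 2
    apply h1.congr
    intro n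
    push_cast
    rw [sq]
    field_simp
  have hhs := hasSum_integral_of_summable_integral_norm hint hsum
  have hae : ∀ᵐ t : ℝ, (∑' n, F n t)
      = Complex.exp (-Complex.I * t * x) * (Real.log (1 + Real.exp (-|t|)) : ℂ) := by
    have h0 : ∀ᵐ t : ℝ, t ≠ 0 := by
      rw [ae_iff]
      have hset : {t : ℝ | ¬ t ≠ 0} = {0} := by ext t; simp
      rw [hset]
      exact Real.volume_singleton
    filter_upwards [h0] with t ht
    have hg := my_hasSum_log t ht
    have hmap := (hg.mapL Complex.ofRealCLM).mul_left (Complex.exp (-Complex.I * t * x))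
    have heq : (fun n : ℕ => Complex.exp (-Complex.I * t * x) *
        Complex.ofRealCLM ((-1:ℝ) ^ n / (n + 1) * Real.exp (-(((n:ℝ) + 1) * |t|))))
        = fun n => F n t := by
      funext n
      rw [hF]
      simp only [Complex.ofRealCLM_apply, Complex.ofReal_mul, Complex.ofReal_exp,
        Complex.ofReal_neg]
      ring
    rw [heq] at hmap
    rw [hmap.tsum_eq]
    simp [Complex.ofRealCLM_apply]
  rw [integral_congr_ae hae] at hhs
  have hein : ∀ n : ℕ, ∫ t : ℝ, F n t
      = ((2 * (-1:ℝ) ^ n / (x ^ 2 + ((n:ℝ) + 1) ^ 2) : ℝ) : ℂ) := by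
    intro n
    rw [hF]
    simp only []
    rw [integral_const_mul, my_integral_kernel x (hpos n)]
    have hne : ((n:ℝ) + 1) ≠ 0 := ne_of_gt (hpos n)
    have hden : (((n:ℝ) + 1) ^ 2 + x ^ 2) ≠ 0 := by positivity
    have hr : (2 * (-1:ℝ) ^ n / (x ^ 2 + ((n:ℝ) + 1) ^ 2))
        = ((-1:ℝ) ^ n / ((n:ℝ) + 1)) * (2 * ((n:ℝ) + 1) / (((n:ℝ) + 1) ^ 2 + x ^ 2)) := by
      field_simp
      ring
    rw [hr, Complex.ofReal_mul]
    congr 1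
    push_cast
    ring
  rw [← hhs.tsum_eq]
  rw [tsum_congr hein, ← Complex.ofReal_tsum]
  rw [show (1 / (2 * Real.pi) : ℂ) = ((1 / (2 * Real.pi) : ℝ) : ℂ) by push_cast; ring]
  rw [← Complex.ofReal_mul, Complex.ofReal_inj]
  rw [show (fun n : ℕ => 2 * (-1:ℝ) ^ n / (x ^ 2 + ((n:ℝ) + 1) ^ 2))
      = fun n : ℕ => 2 * ((-1:ℝ) ^ n / (x ^ 2 + ((n:ℝ) + 1) ^ 2)) from
    funext fun n => by ring]
  rw [tsum_mul_left]
  field_simp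
end

section
/- Let (X_k)_{k∈ℕ} be independent, identically distributed nonnegative integrable random variables with E X_1 = 1, and let S_n := X_1 + ⋯ + X_n. Then for all real a < b, almost surely lim_{T→∞} sup_{u∈[a,b]} |e^{−T} S_{⌊e^{T+u}⌋} − e^u| = 0. -/
open Filter Topology MeasureTheory ProbabilityTheory

lemma det {x : ℕ → ℝ} (hx : Tendsto (fun n : ℕ => x n / n) atTop (𝓝 1))
    {a b : ℝ} (hab : a < b) :
    Tendsto (fun T : ℝ => ⨆ u : Set.Icc a b,
        |Real.exp (-T) * x ⌊Real.exp (T + (u : ℝ))⌋₊ - Real.exp (u : ℝ)|)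
      atTop (𝓝 0) := by
  haveI : Nonempty (Set.Icc a b) := (Set.nonempty_Icc.mpr hab.le).to_subtype
  rw [Metric.tendsto_atTop]
  intro ε hε
  set ε' : ℝ := ε / (4 * Real.exp b) with hε'
  have hε'pos : 0 < ε' := by positivity
  have h1 : ∀ᶠ n : ℕ in atTop, |x n / n - 1| ≤ ε' :=
    (hx.sub_const 1).abs.eventually_le_const (by simpa using hε'pos)
  obtain ⟨n₀, hn₀⟩ := (h1.and (eventually_ge_atTop 1)).exists_forall_of_atTop
  refine ⟨max (Real.log n₀ - a + 1) (Real.log (4 / ε)), fun T hT => ?_⟩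
  have hT1 : Real.log n₀ - a + 1 ≤ T := le_trans (le_max_left _ _) hT
  have hT2 : Real.log (4 / ε) ≤ T := le_trans (le_max_right _ _) hT
  have hexpT : Real.exp (-T) ≤ ε / 4 := by
    rw [Real.log_le_iff_le_exp (by positivity)] at hT2
    rw [Real.exp_neg]
    have := one_div_le_one_div_of_le (by positivity : (0:ℝ) < 4/ε) hT2
    rw [one_div, one_div_div] at this
    exact this
  -- main pointwise bound
  have key : ∀ u : Set.Icc a b,
      |Real.exp (-T) * x ⌊Real.exp (T + (u : ℝ))⌋₊ - Real.exp (u : ℝ)| ≤ ε / 2 := by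
    rintro ⟨u, hu1, hu2⟩
    set t : ℝ := Real.exp (T + u) with ht
    set N : ℕ := ⌊t⌋₊ with hN
    have htpos : 0 < t := Real.exp_pos _
    have hNle : (N : ℝ) ≤ t := Nat.floor_le htpos.le
    have hNgt : t - 1 < N := Nat.sub_one_lt_floor t
    -- N ≥ n₀
    have hNn₀ : n₀ ≤ N := by
      apply Nat.le_floor
      calc (n₀ : ℝ) ≤ Real.exp (Real.log n₀ + 1) := by
            rcases Nat.eq_zero_or_pos n₀ with h | h
            · simp [h]; positivity
            · have h0 : (0:ℝ) < n₀ := by exact_mod_cast h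
              nth_rewrite 1 [← Real.exp_log h0]
              exact Real.exp_le_exp.mpr (by linarith)
        _ ≤ Real.exp (T + u) := by
            rw [Real.exp_le_exp]; linarith
    obtain ⟨hxN, hN1⟩ := hn₀ N hNn₀
    have hNpos : (0:ℝ) < N := by exact_mod_cast hN1
    have hxNd : |x N - N| ≤ ε' * N := by
      have heq : x N - (N:ℝ) = (x N / N - 1) * N := by field_simp
      rw [heq, abs_mul, abs_of_pos hNpos]
      exact mul_le_mul_of_nonneg_right hxN hNpos.le
    have hexpu : Real.exp u ≤ Real.exp b := Real.exp_le_exp.mpr hu2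
    have exp_mul : Real.exp (-T) * t = Real.exp u := by
      rw [ht, ← Real.exp_add]; ring_nf
    have expTpos : (0:ℝ) < Real.exp (-T) := Real.exp_pos _
    calc |Real.exp (-T) * x N - Real.exp u|
        = |Real.exp (-T) * (x N - N) + Real.exp (-T) * ((N:ℝ) - t)| := by
          rw [← exp_mul]; ring_nf
      _ ≤ |Real.exp (-T) * (x N - N)| + |Real.exp (-T) * ((N:ℝ) - t)| := abs_add_le _ _
      _ ≤ Real.exp (-T) * (ε' * N) + Real.exp (-T) * 1 := by
          gcongr
          · rw [abs_mul, abs_of_pos expTpos]; gcongr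
          · rw [abs_mul, abs_of_pos expTpos]
            gcongr
            rw [abs_le]; constructor <;> linarith
      _ ≤ ε' * Real.exp u + ε / 4 := by
          have hA : Real.exp (-T) * (N:ℝ) ≤ Real.exp u := by
            rw [← exp_mul]; exact mul_le_mul_of_nonneg_left hNle expTpos.le
          nlinarith [mul_le_mul_of_nonneg_left hA hε'pos.le]
      _ ≤ ε / 2 := by
          have hstep : ε' * Real.exp u ≤ ε / 4 := by
            rw [hε', div_mul_eq_mul_div, div_le_div_iff₀ (by positivity) (by positivity)]
            nlinarith
          linarith
  have hsup_nonneg : 0 ≤ ⨆ u : Set.Icc a b,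
      |Real.exp (-T) * x ⌊Real.exp (T + (u : ℝ))⌋₊ - Real.exp (u : ℝ)| :=
    Real.iSup_nonneg (fun u => abs_nonneg _)
  rw [Real.dist_eq, sub_zero, abs_of_nonneg hsup_nonneg]
  calc _ ≤ ε / 2 := ciSup_le key
    _ < ε := by linarith

theorem stmt18
    {Ω : Type*} [MeasurableSpace Ω] {P : Measure Ω} [IsProbabilityMeasure P]
    (X : ℕ → Ω → ℝ) (hmeas : ∀ k, Measurable (X k))
    (hindep : iIndepFun X P)
    (hident : ∀ k, IdentDistrib (X k) (X 0) P P)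
    (hnonneg : ∀ k ω, 0 ≤ X k ω)
    (hint : Integrable (X 0) P) (hmean : ∫ ω, X 0 ω ∂P = 1)
    (a b : ℝ) (hab : a < b) :
    ∀ᵐ ω ∂P, Tendsto
      (fun T : ℝ => ⨆ u : Set.Icc a b,
        |Real.exp (-T) * (∑ k ∈ Finset.range ⌊Real.exp (T + (u : ℝ))⌋₊, X k ω) -
          Real.exp (u : ℝ)|)
      atTop (𝓝 0) := by
  have hpair : Pairwise (Function.onFun (IndepFun · · P) X) := fun i j hij => hindep.indepFun hij
  filter_upwards [strong_law_ae_real X hint hpair hident] with ω hω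
  rw [hmean] at hω
  exact det hω hab
end
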